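/- arXiv:1511.07532 — 6 statements merged into one kernel-verified Lean document; each statement's English description precedes it below -/
import Mathlib

section
/- The real number 0.46891012141516182021222425..., whose decimal expansion is obtained by concatenating the base-10 digits of the composite positive integers in increasing order, is not simply strongly normal to the base 10 (and hence not strongly normal to the base 10). -/
open Filter

/-- The `i`-th digit (starting from `i = 0`) of the base-`b` expansion of the real `ξ`. -/
noncomputable def digitOf (b : ℕ) (ξ : ℝ) (i : ℕ) : ℕ :=
  (⌊ξ * (b : ℝ) ^ (i + 1)⌋).toNat % b

/-- `m_{k,b}(ξ; n)`: the number of occurrences of the digit `k` among the first `n`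
base-`b` digits of `ξ`. -/
noncomputable def digCount (b : ℕ) (ξ : ℝ) (k n : ℕ) : ℕ :=
  ((Finset.range n).filter fun i => digitOf b ξ i = k).card

/-- The ratio appearing in the definition of (simple) strong normality. -/
noncomputable def snRatio (b : ℕ) (ξ : ℝ) (k n : ℕ) : ℝ :=
  ((digCount b ξ k n : ℝ) - (n : ℝ) / b) / Real.sqrt (2 * n * Real.log (Real.log n))

/-- `ξ` is simply strongly normal to base `b`. -/
def SimplyStronglyNormal (b : ℕ) (ξ : ℝ) : Prop :=
  ∀ k < b,
    Filter.atTop.limsup (fun n : ℕ => (snRatio b ξ k n : EReal))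
        = ((Real.sqrt ((b : ℝ) - 1) / b : ℝ) : EReal) ∧
    Filter.atTop.liminf (fun n : ℕ => (snRatio b ξ k n : EReal))
        = ((-(Real.sqrt ((b : ℝ) - 1) / b) : ℝ) : EReal)

/-- `ξ` is strongly normal to base `b`: simply strongly normal to base `b^m` for all `m ≥ 1`. -/
def StronglyNormal (b : ℕ) (ξ : ℝ) : Prop :=
  ∀ m : ℕ, 1 ≤ m → SimplyStronglyNormal (b ^ m) ξ

/-- `ℓ_b(n)`: the number of base-`b` digits of `n`. -/
def lenb (b n : ℕ) : ℕ := (Nat.digits b n).length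

/-- The base-`b` digit string (most significant digit first) of `a`,
repeated `⌊c ^ ℓ_b(a)⌋` times. -/
noncomputable def block (b : ℕ) (c : ℝ) (a : ℕ) : List ℕ :=
  (List.replicate ⌊c ^ lenb b a⌋₊ (Nat.digits b a).reverse).flatten

/-- The concatenation of the blocks of the first `N` elements of `B` (in increasing order). -/
noncomputable def prefixDigits (b : ℕ) (c : ℝ) (B : Set ℕ) (N : ℕ) : List ℕ :=
  ((List.range N).map fun n => block b c (Nat.nth (· ∈ B) n)).flatten

/-- The `i`-th digit of the infinite concatenation of the blocks of the elements of `B`. -/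
noncomputable def xiDigit (b : ℕ) (c : ℝ) (B : Set ℕ) (i : ℕ) : ℕ :=
  (prefixDigits b c B (i + 1)).getD i 0

/-- `ξ_{B,b,c}`: the real number whose base-`b` expansion is the concatenation, over the
elements `a` of `B` in increasing order, of the base-`b` digits of `a` repeated
`⌊c ^ ℓ_b(a)⌋` times. -/
noncomputable def xiReal (b : ℕ) (c : ℝ) (B : Set ℕ) : ℝ :=
  ∑' i : ℕ, (xiDigit b c B i : ℝ) / (b : ℝ) ^ (i + 1)

/-- `A(x)`: the number of elements of `A` that are at most `x`. -/
noncomputable def countA (A : Set ℕ) (x : ℕ) : ℕ := Set.ncard {n ∈ A | n ≤ x}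

/-- `d_{b,c,k}`: the total number of base-`b` digits in the concatenation, for
`n = 1, …, 2·b^(k-1) − 1`, of the base-`b` digit string of `n` repeated `⌊c^{ℓ_b(n)}⌋` times. -/
noncomputable def dTotal (b : ℕ) (c : ℝ) (k : ℕ) : ℕ :=
  ∑ n ∈ Finset.Icc 1 (2 * b ^ (k - 1) - 1), ⌊c ^ lenb b n⌋₊ * lenb b n

/-- The closed formula for `d_{b,c,k}`. -/
noncomputable def dFormula (b : ℕ) (c : ℝ) (k : ℕ) : ℕ :=
  ⌊c ^ k⌋₊ * k * b ^ (k - 1) +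
    ∑ n ∈ Finset.Icc 1 (k - 1), ⌊c ^ n⌋₊ * n * b ^ (n - 1) * (b - 1)


section DigitId
variable {b : ℕ}

lemma geo_term (hb : 2 ≤ b) (j : ℕ) :
    (((b : ℝ) - 1) / b) * ((b : ℝ)⁻¹) ^ j = ((b : ℝ) - 1) / (b : ℝ) ^ (j + 1) := by
  have hbne : (b : ℝ) ≠ 0 := by positivity
  rw [inv_pow, pow_succ]
  field_simp

lemma geo_summable (hb : 2 ≤ b) : Summable (fun j : ℕ => ((b : ℝ) - 1) / (b : ℝ) ^ (j + 1)) := by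
  have hb1 : (1 : ℝ) < b := by exact_mod_cast hb
  have h1 : Summable (fun j : ℕ => ((b : ℝ)⁻¹) ^ j) :=
    summable_geometric_of_lt_one (by positivity) (by rw [inv_lt_one_iff₀]; right; exact hb1)
  exact (h1.mul_left (((b : ℝ) - 1) / b)).congr (geo_term hb)

lemma geo_tsum (hb : 2 ≤ b) : (∑' j : ℕ, ((b : ℝ) - 1) / (b : ℝ) ^ (j + 1)) = 1 := by
  have hb1 : (1 : ℝ) < b := by exact_mod_cast hb
  have hbne : (b : ℝ) ≠ 0 := by positivity
  have h1 : (∑' j : ℕ, ((b : ℝ)⁻¹) ^ j) = (1 - (b : ℝ)⁻¹)⁻¹ :=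
    tsum_geometric_of_lt_one (by positivity) (by rw [inv_lt_one_iff₀]; right; exact hb1)
  have h2 : (∑' j : ℕ, ((b : ℝ) - 1) / (b : ℝ) ^ (j + 1))
      = (((b : ℝ) - 1) / b) * ∑' j : ℕ, ((b : ℝ)⁻¹) ^ j := by
    rw [← tsum_mul_left]
    exact (tsum_congr fun j => (geo_term hb j).symm)
  rw [h2, h1]
  have hb2 : (b:ℝ) - 1 ≠ 0 := by linarith
  have : (1 - (b:ℝ)⁻¹)⁻¹ = b / (b - 1) := by
    rw [inv_eq_iff_eq_inv, inv_div]
    field_simp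
  rw [this, div_mul_div_comm, mul_comm ((b:ℝ)-1) _]
  exact div_self (mul_ne_zero hbne hb2)

lemma summand_le (hb : 2 ≤ b) (e : ℕ → ℕ) (he : ∀ i, e i < b) (j : ℕ) :
    (e j : ℝ) / (b : ℝ) ^ (j + 1) ≤ ((b : ℝ) - 1) / (b : ℝ) ^ (j + 1) := by
  apply div_le_div_of_nonneg_right ?_ (by positivity)
  have : (e j) + 1 ≤ b := he j
  have := (Nat.cast_le (α := ℝ)).2 this
  push_cast at this; linarith

lemma dig_summable (hb : 2 ≤ b) (e : ℕ → ℕ) (he : ∀ i, e i < b) :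
    Summable (fun j : ℕ => (e j : ℝ) / (b : ℝ) ^ (j + 1)) :=
  Summable.of_nonneg_of_le (fun j => by positivity) (summand_le hb e he) (geo_summable hb)

lemma digit_tsum_eq (hb : 2 ≤ b) (d : ℕ → ℕ) (hd : ∀ i, d i < b)
    (h9 : ∀ N, ∃ i, N ≤ i ∧ d i + 1 < b) (i : ℕ) :
    (⌊(∑' j, (d j : ℝ) / (b : ℝ) ^ (j + 1)) * (b : ℝ) ^ (i + 1)⌋).toNat % b = d i := by
  have hb1 : (1 : ℝ) < b := by exact_mod_cast hb
  have hbne : (b : ℝ) ≠ 0 := by positivity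
  set ξ := (∑' j, (d j : ℝ) / (b : ℝ) ^ (j + 1)) with hξ
  set T := (∑' j : ℕ, (d (j + (i + 1)) : ℝ) / (b : ℝ) ^ (j + 1)) with hT
  have hsum : Summable (fun j : ℕ => (d j : ℝ) / (b : ℝ) ^ (j + 1)) := dig_summable hb d hd
  have hsumtail : Summable (fun j : ℕ => (d (j + (i + 1)) : ℝ) / (b : ℝ) ^ (j + 1)) :=
    dig_summable hb _ (fun j => hd _)
  have hT0 : 0 ≤ T := tsum_nonneg (fun j => by positivity)
  have hT1 : T < 1 := by
    rw [hT, ← geo_tsum hb]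
    obtain ⟨i0, hi0N, hi0⟩ := h9 (i + 1)
    refine Summable.tsum_lt_tsum (fun j => summand_le hb _ (fun j => hd _) j) (i := i0 - (i + 1)) ?_
      hsumtail (geo_summable hb)
    have hpos : (0:ℝ) < (b : ℝ) ^ (i0 - (i + 1) + 1) := by positivity
    rw [div_lt_div_iff_of_pos_right hpos]
    have heq : i0 - (i + 1) + (i + 1) = i0 := by omega
    rw [heq]
    have : (d i0) + 1 ≤ b - 1 + 1 := by omega
    have := (Nat.cast_le (α := ℝ)).2 (by omega : d i0 + 1 + 1 ≤ b)
    push_cast at this; linarith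
  -- the head sum
  set S : ℕ := ∑ j ∈ Finset.range (i + 1), d j * b ^ (i - j) with hS
  have hsplit : ξ * (b : ℝ) ^ (i + 1) = (S : ℝ) + T := by
    have h1 : ξ = ∑ j ∈ Finset.range (i+1), (d j : ℝ) / (b : ℝ) ^ (j + 1)
        + ∑' j : ℕ, (d (j + (i + 1)) : ℝ) / (b : ℝ) ^ (j + (i + 1) + 1) := by
      rw [hξ, ← Summable.sum_add_tsum_nat_add (i+1) hsum]
    rw [h1, add_mul]
    congr 1
    · rw [Finset.sum_mul, hS]
      push_cast
      refine Finset.sum_congr rfl fun j hj => ?_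
      have hj' : j < i + 1 := Finset.mem_range.1 hj
      have hpow : (b : ℝ) ^ (i + 1) = (b : ℝ) ^ (j + 1) * (b : ℝ) ^ (i - j) := by
        rw [← pow_add]; congr 1; omega
      rw [hpow, ← mul_assoc, div_mul_cancel₀ _ (by positivity : ((b:ℝ)^(j+1)) ≠ 0)]
    · rw [← tsum_mul_right, hT]
      refine tsum_congr fun j => ?_
      have hpow : (b : ℝ) ^ (j + (i + 1) + 1) = (b : ℝ) ^ (j + 1) * (b : ℝ) ^ (i + 1) := by
        rw [← pow_add]; congr 1; omega
      rw [hpow, mul_comm]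
      have : ((b:ℝ)^(i+1)) ≠ 0 := by positivity
      field_simp
  have hfloor : ⌊ξ * (b : ℝ) ^ (i + 1)⌋ = (S : ℤ) := by
    rw [hsplit, Int.floor_eq_iff]
    constructor
    · push_cast; linarith
    · push_cast; linarith
  rw [hfloor]
  have : ((S : ℤ)).toNat = S := Int.toNat_natCast S
  rw [this, hS]
  -- S % b = d i
  rw [Finset.sum_range_succ]
  have hdvd : b ∣ ∑ j ∈ Finset.range i, d j * b ^ (i - j) := by
    refine Finset.dvd_sum fun j hj => ?_
    have : j < i := Finset.mem_range.1 hj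
    exact Dvd.dvd.mul_left (dvd_pow_self b (by omega : i - j ≠ 0)) _
  have h1 : (∑ j ∈ Finset.range i, d j * b ^ (i - j)) % b = 0 := Nat.mod_eq_zero_of_dvd hdvd
  have h2 : i - i = 0 := by omega
  rw [Nat.add_mod, h1, h2, pow_zero, mul_one, Nat.zero_add, Nat.mod_mod, Nat.mod_eq_of_lt (hd i)]
end DigitId


/-! Stage 2 -/

def pc (n : ℕ) : Prop := 2 ≤ n ∧ ¬ n.Prime

instance : DecidablePred pc := fun n => by unfold pc; infer_instance

def Bc : Set ℕ := {n : ℕ | 2 ≤ n ∧ ¬ n.Prime}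

lemma mem_Bc_iff (n : ℕ) : (n ∈ Bc) = pc n := rfl

lemma pc_infinite : (setOf pc).Infinite := by
  refine Set.infinite_of_injective_forall_mem (f := fun k : ℕ => 2 * k + 4) ?_ ?_
  · intro a b hab
    have : 2 * a + 4 = 2 * b + 4 := hab
    omega
  · intro k
    show 2 ≤ 2 * k + 4 ∧ ¬ (2 * k + 4).Prime
    refine ⟨by omega, ?_⟩
    have h2 : 2 * k + 4 = 2 * (k + 2) := by ring
    rw [h2]
    exact Nat.not_prime_mul (by omega) (by omega)

lemma nth_pc (n : ℕ) : pc (Nat.nth pc n) := Nat.nth_mem_of_infinite pc_infinite n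

lemma nth_pc_pos (n : ℕ) : 0 < Nat.nth pc n := lt_of_lt_of_le (by norm_num) (nth_pc n).1

lemma nth_Bc_eq : (Nat.nth (· ∈ Bc)) = Nat.nth pc := rfl

lemma lenb_nth_pos (n : ℕ) : 0 < lenb 10 (Nat.nth pc n) := by
  rw [lenb, List.length_pos_iff]
  exact Nat.digits_ne_nil_iff_ne_zero.2 (nth_pc_pos n).ne'

lemma block_one (a : ℕ) : block 10 1 a = (Nat.digits 10 a).reverse := by
  simp [block]

lemma prefixDigits_succ (N : ℕ) :
    prefixDigits 10 1 Bc (N + 1)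
      = prefixDigits 10 1 Bc N ++ (Nat.digits 10 (Nat.nth pc N)).reverse := by
  rw [prefixDigits, prefixDigits, List.range_succ, List.map_append, List.flatten_append]
  simp [block_one, nth_Bc_eq]

lemma prefixDigits_length (N : ℕ) :
    (prefixDigits 10 1 Bc N).length = ∑ n ∈ Finset.range N, lenb 10 (Nat.nth pc n) := by
  induction N with
  | zero => simp [prefixDigits]
  | succ N ih =>
      rw [prefixDigits_succ, List.length_append, ih, Finset.sum_range_succ, lenb,
        List.length_reverse]

lemma prefixDigits_count (k N : ℕ) :
    (prefixDigits 10 1 Bc N).count k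
      = ∑ n ∈ Finset.range N, (Nat.digits 10 (Nat.nth pc n)).count k := by
  induction N with
  | zero => simp [prefixDigits]
  | succ N ih =>
      rw [prefixDigits_succ, List.count_append, ih, Finset.sum_range_succ, List.count_reverse]

lemma le_prefixDigits_length (N : ℕ) : N ≤ (prefixDigits 10 1 Bc N).length := by
  rw [prefixDigits_length]
  calc N = ∑ _n ∈ Finset.range N, 1 := by simp
  _ ≤ _ := Finset.sum_le_sum fun n _ => lenb_nth_pos n

lemma prefixDigits_prefix {M N : ℕ} (h : M ≤ N) :
    prefixDigits 10 1 Bc M <+: prefixDigits 10 1 Bc N := by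
  induction N, h using Nat.le_induction with
  | base => exact List.prefix_rfl
  | succ N hMN ih =>
      refine ih.trans ?_
      rw [prefixDigits_succ]
      exact List.prefix_append _ _

lemma xiDigit_eq_getElem {i N : ℕ} (h : i < (prefixDigits 10 1 Bc N).length) :
    xiDigit 10 1 Bc i = (prefixDigits 10 1 Bc N)[i] := by
  have hi1 : i < (prefixDigits 10 1 Bc (i + 1)).length :=
    lt_of_lt_of_le (Nat.lt_succ_self i) (le_prefixDigits_length (i + 1))
  rw [xiDigit, List.getD_eq_getElem _ _ hi1]
  rcases le_total (i + 1) N with hle | hle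
  · exact (prefixDigits_prefix hle).getElem hi1
  · exact ((prefixDigits_prefix hle).getElem h).symm

lemma xiDigit_lt (i : ℕ) : xiDigit 10 1 Bc i < 10 := by
  have hi1 : i < (prefixDigits 10 1 Bc (i + 1)).length :=
    lt_of_lt_of_le (Nat.lt_succ_self i) (le_prefixDigits_length (i + 1))
  rw [xiDigit_eq_getElem hi1]
  have hmem := List.getElem_mem hi1
  simp only [prefixDigits] at hmem
  obtain ⟨l, hl, hml⟩ := List.mem_flatten.1 hmem
  obtain ⟨n, _, rfl⟩ := List.mem_map.1 hl
  rw [block_one, List.mem_reverse] at hml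
  exact Nat.digits_lt_base (by norm_num) hml

lemma xiDigit_block {N t : ℕ} (ht : t < lenb 10 (Nat.nth pc N)) :
    xiDigit 10 1 Bc ((prefixDigits 10 1 Bc N).length + t)
      = (Nat.digits 10 (Nat.nth pc N)).reverse[t]'(by
          rw [List.length_reverse]; exact ht) := by
  have hlen : ((prefixDigits 10 1 Bc N).length + t) < (prefixDigits 10 1 Bc (N+1)).length := by
    rw [prefixDigits_succ, List.length_append, List.length_reverse]
    have : t < lenb 10 (Nat.nth pc N) := ht
    rw [lenb] at this
    omega
  rw [xiDigit_eq_getElem hlen]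
  have heq := prefixDigits_succ N
  rw [List.getElem_of_eq heq hlen, List.getElem_append_right (by omega)]
  congr 1
  omega

lemma nine_rep (L : ℕ) : Nat.ofDigits 10 (List.replicate L 9) + 1 = 10 ^ L := by
  induction L with
  | zero => simp
  | succ L ih =>
      rw [List.replicate_succ, Nat.ofDigits_cons, pow_succ]
      push_cast
      omega

lemma pc_pow10 {L : ℕ} (hL : 1 ≤ L) : pc (10 ^ L) := by
  constructor
  · calc 2 ≤ 10 ^ 1 := by norm_num
    _ ≤ 10 ^ L := Nat.pow_le_pow_right (by norm_num) hL
  · obtain ⟨L', rfl⟩ : ∃ L', L = L' + 1 := ⟨L - 1, by omega⟩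
    have : 10 ^ (L' + 1) = 2 * (5 * 10 ^ L') := by
      rw [pow_succ]; ring
    rw [this]
    have h5 : 1 ≤ 10 ^ L' := Nat.one_le_pow _ _ (by norm_num)
    exact Nat.not_prime_mul (by omega) (by omega)

lemma exists_non_nine (N : ℕ) : ∃ i, N ≤ i ∧ xiDigit 10 1 Bc i + 1 < 10 := by
  -- find n ≥ N and a non-9 digit in digits of nth pc n
  have key : ∃ n, N ≤ n ∧ ∃ x ∈ Nat.digits 10 (Nat.nth pc n), x ≠ 9 := by
    by_cases h : ∀ x ∈ Nat.digits 10 (Nat.nth pc N), x = 9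
    · -- nth pc N = 10^L - 1, next element is 10^L
      set a := Nat.nth pc N with ha
      have hrep : Nat.digits 10 a = List.replicate (Nat.digits 10 a).length 9 :=
        List.eq_replicate_iff.2 ⟨rfl, h⟩
      set L := (Nat.digits 10 a).length with hLdef
      have haL : a + 1 = 10 ^ L := by
        conv_lhs => rw [← Nat.ofDigits_digits 10 a, hrep]
        exact nine_rep L
      have hL1 : 1 ≤ L := by
        have h1 : Nat.digits 10 a ≠ [] := Nat.digits_ne_nil_iff_ne_zero.2 (nth_pc_pos N).ne'
        have h2 := List.length_pos_iff.2 h1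
        omega
      have hpca1 : pc (a + 1) := haL ▸ pc_pow10 hL1
      have hcnt : Nat.count pc (a + 1) = N + 1 := by
        rw [Nat.count_succ, if_pos (nth_pc N)]
        rw [ha, Nat.count_nth_of_infinite pc_infinite]
      have hnth : Nat.nth pc (N + 1) = a + 1 := by
        rw [← hcnt, Nat.nth_count hpca1]
      refine ⟨N + 1, by omega, 0, ?_, by omega⟩
      rw [hnth, haL]
      have hpos : 0 < 10 ^ L := by positivity
      rw [Nat.digits_def' (by norm_num : (1:ℕ) < 10) hpos]
      have : 10 ^ L % 10 = 0 := by
        have : (10:ℕ) ∣ 10 ^ L := dvd_pow_self 10 (by omega)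
        omega
      rw [this]
      exact List.mem_cons_self
    · push_neg at h
      obtain ⟨x, hx, hx9⟩ := h
      exact ⟨N, le_rfl, x, hx, hx9⟩
  obtain ⟨n, hn, x, hx, hx9⟩ := key
  have hxlt : x < 10 := Nat.digits_lt_base (by norm_num) hx
  rw [← List.mem_reverse] at hx
  obtain ⟨t, ht, hxt⟩ := List.mem_iff_getElem.1 hx
  have ht' : t < lenb 10 (Nat.nth pc n) := by
    rw [List.length_reverse] at ht; exact ht
  refine ⟨(prefixDigits 10 1 Bc n).length + t, ?_, ?_⟩
  · have := le_prefixDigits_length n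
    omega
  · rw [xiDigit_block ht', hxt]
    omega

lemma count_eq_card (l : List ℕ) (dd : ℕ → ℕ) (h : ∀ i (hi : i < l.length), dd i = l[i]) (k : ℕ) :
    ((Finset.range l.length).filter fun i => dd i = k).card = l.count k := by
  induction l using List.reverseRecOn with
  | nil => simp
  | append_singleton l x ih =>
      have hlen : (l ++ [x]).length = l.length + 1 := by simp
      rw [hlen, Finset.range_add_one, Finset.filter_insert]
      have hx : dd l.length = x := by
        have := h l.length (by simp)
        rwa [List.getElem_concat_length rfl] at this
      have hih := ih (fun i hi => by
        have := h i (by simp; omega)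
        rwa [List.getElem_append_left hi] at this)
      rw [List.count_append]
      by_cases hxk : x = k
      · rw [if_pos (by rw [hx, hxk]), Finset.card_insert_of_notMem (by simp), hih, hxk]
        simp
      · rw [if_neg (by rw [hx]; exact hxk), hih]
        have : List.count k [x] = 0 := by
          simp [List.count_singleton]
          omega
        omega

lemma digitOf_xiReal (i : ℕ) : digitOf 10 (xiReal 10 1 Bc) i = xiDigit 10 1 Bc i := by
  rw [digitOf, xiReal]
  exact digit_tsum_eq (by norm_num) _ xiDigit_lt exists_non_nine i

lemma digCount_prefixLen (k N : ℕ) :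
    digCount 10 (xiReal 10 1 Bc) k ((prefixDigits 10 1 Bc N).length)
      = ∑ n ∈ Finset.range N, (Nat.digits 10 (Nat.nth pc n)).count k := by
  rw [digCount]
  have h1 : ((Finset.range (prefixDigits 10 1 Bc N).length).filter
      fun i => digitOf 10 (xiReal 10 1 Bc) i = k)
      = ((Finset.range (prefixDigits 10 1 Bc N).length).filter
      fun i => xiDigit 10 1 Bc i = k) := by
    apply Finset.filter_congr
    intro i _
    rw [digitOf_xiReal]
  rw [h1, count_eq_card _ _ (fun i hi => xiDigit_eq_getElem hi) k, prefixDigits_count]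

/-! Stage 3 -/

lemma sum_nth_eq (f : ℕ → ℕ) (M : ℕ) :
    ∑ n ∈ Finset.range (Nat.count pc M), f (Nat.nth pc n)
      = ∑ a ∈ (Finset.range M).filter pc, f a := by
  refine Finset.sum_nbij' (fun n => Nat.nth pc n) (fun a => Nat.count pc a) ?_ ?_ ?_ ?_ ?_
  · intro n hn
    rw [Finset.mem_range] at hn
    rw [Finset.mem_filter, Finset.mem_range]
    refine ⟨?_, Nat.nth_mem_of_infinite pc_infinite n⟩
    have h : Nat.count pc (Nat.nth pc n) < Nat.count pc M := by
      rw [Nat.count_nth_of_infinite pc_infinite n]; exact hn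
    exact Nat.lt_of_count_lt_count h
  · intro a ha
    rw [Finset.mem_filter, Finset.mem_range] at ha
    rw [Finset.mem_range]
    exact Nat.count_strict_mono ha.2 ha.1
  · intro n _
    exact Nat.count_nth_of_infinite pc_infinite n
  · intro a ha
    rw [Finset.mem_filter] at ha
    exact Nat.nth_count ha.2
  · intro n _
    rfl

lemma lenb_eq {K a : ℕ} (h1 : 10 ^ K ≤ a) (h2 : a < 10 ^ (K + 1)) : lenb 10 a = K + 1 := by
  have ha : a ≠ 0 := by
    have : 0 < 10 ^ K := by positivity
    omega
  rw [lenb, Nat.digits_len 10 a (by norm_num) ha, Nat.log_eq_of_pow_le_of_lt_pow h1 h2]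

lemma lenb_le {K a : ℕ} (h2 : a < 10 ^ (K + 1)) : lenb 10 a ≤ K + 1 := by
  rcases Nat.eq_zero_or_pos a with rfl | ha
  · simp [lenb]
  · rw [lenb, Nat.digits_len 10 a (by norm_num) ha.ne']
    have := Nat.log_lt_of_lt_pow ha.ne' h2
    omega

lemma count_digits_eq (k : ℕ) : ∀ a : ℕ, 0 < a →
    (Nat.digits 10 a).count k
      = ∑ j ∈ Finset.range (lenb 10 a), (if a / 10 ^ j % 10 = k then 1 else 0) := by
  intro a
  induction a using Nat.strong_induction_on with
  | _ a ih =>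
    intro ha
    rw [Nat.digits_def' (by norm_num : (1:ℕ) < 10) ha]
    rcases Nat.lt_or_ge a 10 with h10 | h10
    · have hdiv : a / 10 = 0 := Nat.div_eq_of_lt h10
      have hlen : lenb 10 a = 1 := by
        rw [lenb, Nat.digits_def' (by norm_num : (1:ℕ) < 10) ha, hdiv]
        simp
      rw [hlen, hdiv]
      have hmod : a % 10 = a := Nat.mod_eq_of_lt h10
      simp only [Nat.digits_zero, Finset.range_one, Finset.sum_singleton, pow_zero,
        Nat.div_one, hmod]
      rcases eq_or_ne a k with rfl | hne
      · simp [List.count_cons]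
      · simp [List.count_cons, hne]
    · have hpos : 0 < a / 10 := Nat.div_pos h10 (by norm_num)
      have hlen : lenb 10 a = lenb 10 (a / 10) + 1 := by
        rw [lenb, lenb, Nat.digits_def' (by norm_num : (1:ℕ) < 10) ha]
        simp
      rw [hlen, List.count_cons, ih (a / 10) (Nat.div_lt_self ha (by norm_num)) hpos,
        Finset.sum_range_succ']
      congr 1
      · refine Finset.sum_congr rfl fun j _ => ?_
        have : a / 10 ^ (j + 1) = a / 10 / 10 ^ j := by
          rw [pow_succ', Nat.div_div_eq_div_mul]
        rw [this]
      · simp only [pow_zero, Nat.div_one]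
        rcases eq_or_ne (a % 10) k with h | h
        · simp [h, List.count_cons]
        · simp [h, List.count_cons]

lemma strip_digit {P R : ℕ} (hP : 0 < P) :
    ((Finset.Ico (R * (P * 10)) (2 * (R * (P * 10)))).filter fun a => a / P % 10 = 0).card
      ≤ R * P := by
  have hQ : 0 < P * 10 := by omega
  have hcard : (Finset.Ico (R * P) (2 * (R * P))).card = R * P := by
    rw [Nat.card_Ico]; omega
  rw [← hcard]
  apply Finset.card_le_card_of_injOn (fun a => a / (P * 10) * P + a % P)
  · intro a ha
    rw [Finset.mem_coe, Finset.mem_filter, Finset.mem_Ico] at ha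
    obtain ⟨⟨hal, har⟩, hd0⟩ := ha
    rw [Finset.mem_coe, Finset.mem_Ico]
    have hmod : a % (P * 10) = a % P := by
      rw [Nat.mod_mul, hd0]; omega
    have hr : a % P < P := Nat.mod_lt _ hP
    have hql : R ≤ a / (P * 10) := (Nat.le_div_iff_mul_le hQ).2 (by
      calc R * (P * 10) ≤ a := hal)
    have hqu : a / (P * 10) < 2 * R := (Nat.div_lt_iff_lt_mul hQ).2 (by
      calc a < 2 * (R * (P * 10)) := har
      _ = 2 * R * (P * 10) := by ring)
    constructor
    · calc R * P ≤ a / (P * 10) * P := Nat.mul_le_mul_right _ hql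
      _ ≤ _ := by dsimp only; omega
    · calc a / (P * 10) * P + a % P < a / (P * 10) * P + P := by omega
      _ = (a / (P * 10) + 1) * P := by ring
      _ ≤ 2 * R * P := Nat.mul_le_mul_right _ (by omega)
      _ = 2 * (R * P) := by ring
  · intro a ha b hb hab
    simp only [Finset.coe_filter, Set.mem_setOf_eq] at ha hb
    obtain ⟨-, hd0a⟩ := ha
    obtain ⟨-, hd0b⟩ := hb
    simp only at hab
    have hra : a % P < P := Nat.mod_lt _ hP
    have hrb : b % P < P := Nat.mod_lt _ hP
    have hdiv : a / (P * 10) = b / (P * 10) := by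
      have h1 : (a / (P * 10) * P + a % P) / P = a / (P * 10) := by
        rw [mul_comm (a / (P * 10)) P, Nat.mul_add_div hP, Nat.div_eq_of_lt hra]
        omega
      have h2 : (b / (P * 10) * P + b % P) / P = b / (P * 10) := by
        rw [mul_comm (b / (P * 10)) P, Nat.mul_add_div hP, Nat.div_eq_of_lt hrb]
        omega
      rw [← h1, ← h2, hab]
    have hmodeq : a % P = b % P := by
      have h1 : (a / (P * 10) * P + a % P) % P = a % P := by
        rw [mul_comm (a / (P * 10)) P, Nat.mul_add_mod, Nat.mod_eq_of_lt hra]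
      have h2 : (b / (P * 10) * P + b % P) % P = b % P := by
        rw [mul_comm (b / (P * 10)) P, Nat.mul_add_mod, Nat.mod_eq_of_lt hrb]
      rw [← h1, ← h2, hab]
    have hmoda : a % (P * 10) = a % P := by rw [Nat.mod_mul, hd0a]; omega
    have hmodb : b % (P * 10) = b % P := by rw [Nat.mod_mul, hd0b]; omega
    have ha' := Nat.div_add_mod a (P * 10)
    have hb' := Nat.div_add_mod b (P * 10)
    rw [hdiv, hmoda, hmodeq, ← hmodb] at ha'
    omega

lemma card_digit_zero_le {K j : ℕ} (hj : j < K) :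
    ((Finset.Ico (10 ^ K) (2 * 10 ^ K)).filter fun a => a / 10 ^ j % 10 = 0).card
      ≤ 10 ^ (K - 1) := by
  have h1 : (10:ℕ) ^ K = 10 ^ (K - j - 1) * (10 ^ j * 10) := by
    rw [← pow_succ, ← pow_add]; congr 1; omega
  have h2 : (10:ℕ) ^ (K - 1) = 10 ^ (K - j - 1) * 10 ^ j := by
    rw [← pow_add]; congr 1; omega
  rw [h1, h2]
  exact strip_digit (by positivity)

lemma zeros_sum_le {K : ℕ} (hK : 1 ≤ K) :
    ∑ a ∈ (Finset.Ico (10 ^ K) (2 * 10 ^ K)).filter pc, (Nat.digits 10 a).count 0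
      ≤ K * 10 ^ (K - 1) := by
  have hstep1 : ∑ a ∈ (Finset.Ico (10 ^ K) (2 * 10 ^ K)).filter pc, (Nat.digits 10 a).count 0
      ≤ ∑ a ∈ Finset.Ico (10 ^ K) (2 * 10 ^ K), (Nat.digits 10 a).count 0 :=
    Finset.sum_le_sum_of_subset (Finset.filter_subset _ _)
  refine hstep1.trans ?_
  have hcount : ∀ a ∈ Finset.Ico (10 ^ K) (2 * 10 ^ K),
      (Nat.digits 10 a).count 0 = ∑ j ∈ Finset.range K, (if a / 10 ^ j % 10 = 0 then 1 else 0) := by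
    intro a ha
    rw [Finset.mem_Ico] at ha
    have hK2 : 2 * 10 ^ K ≤ 10 ^ (K + 1) := by
      rw [pow_succ]; omega
    have hpos : 0 < a := lt_of_lt_of_le (by positivity) ha.1
    rw [count_digits_eq 0 a hpos, lenb_eq ha.1 (by omega), Finset.sum_range_succ]
    have hlead : a / 10 ^ K % 10 = 1 := by
      have : a / 10 ^ K = 1 := Nat.div_eq_of_lt_le (by omega) (by omega)
      rw [this]
    rw [hlead]
    simp
  rw [Finset.sum_congr rfl hcount, Finset.sum_comm]
  calc ∑ j ∈ Finset.range K, ∑ a ∈ Finset.Ico (10 ^ K) (2 * 10 ^ K),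
        (if a / 10 ^ j % 10 = 0 then 1 else 0)
      = ∑ j ∈ Finset.range K,
        ((Finset.Ico (10 ^ K) (2 * 10 ^ K)).filter fun a => a / 10 ^ j % 10 = 0).card := by
        refine Finset.sum_congr rfl fun j _ => ?_
        rw [Finset.card_filter]
    _ ≤ ∑ j ∈ Finset.range K, 10 ^ (K - 1) := by
        refine Finset.sum_le_sum fun j hj => ?_
        exact card_digit_zero_le (Finset.mem_range.1 hj)
    _ = K * 10 ^ (K - 1) := by
        rw [Finset.sum_const, Finset.card_range, smul_eq_mul]

lemma prime_card_bound {K : ℕ} (hK : 1 ≤ K) :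
    K * ((Finset.Ico (10 ^ K) (2 * 10 ^ K)).filter Nat.Prime).card ≤ 7 * 10 ^ (K - 1) := by
  set s := (Finset.Ico (10 ^ K) (2 * 10 ^ K)).filter Nat.Prime with hs
  have hmem : ∀ p ∈ s, 10 ^ K < p ∧ p < 2 * 10 ^ K ∧ p.Prime := by
    intro p hp
    rw [hs, Finset.mem_filter, Finset.mem_Ico] at hp
    refine ⟨?_, hp.1.2, hp.2⟩
    rcases Nat.lt_or_ge (10 ^ K) p with h | h
    · exact h
    · exfalso
      have : p = 10 ^ K := by omega
      exact (pc_pow10 hK).2 (this ▸ hp.2)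
  have hdvd : ∏ p ∈ s, p ∣ Nat.choose (2 * 10 ^ K) (10 ^ K) := by
    refine Finset.prod_primes_dvd _ (fun p hp => (hmem p hp).2.2.prime) (fun p hp => ?_)
    obtain ⟨h1, h2, hp⟩ := hmem p hp
    exact hp.dvd_choose h1 (by omega) (by omega)
  have hchoose_pos : 0 < Nat.choose (2 * 10 ^ K) (10 ^ K) :=
    Nat.choose_pos (by omega)
  have hle1 : (10 ^ K) ^ s.card ≤ ∏ p ∈ s, p :=
    Finset.pow_card_le_prod s _ _ (fun p hp => (hmem p hp).1.le)
  have hle2 : ∏ p ∈ s, p ≤ Nat.choose (2 * 10 ^ K) (10 ^ K) := Nat.le_of_dvd hchoose_pos hdvd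
  have hle3 : Nat.choose (2 * 10 ^ K) (10 ^ K) ≤ 2 ^ (2 * 10 ^ K) := by
    rw [← Nat.sum_range_choose (2 * 10 ^ K)]
    exact Finset.single_le_sum (f := fun m => Nat.choose (2 * 10 ^ K) m)
      (fun m _ => Nat.zero_le _) (Finset.mem_range.2 (by omega))
  have hle4 : (2:ℕ) ^ (2 * 10 ^ K) ≤ 10 ^ (7 * 10 ^ (K - 1)) := by
    have h2 : 2 * 10 ^ K = 20 * 10 ^ (K - 1) := by
      obtain ⟨K', rfl⟩ : ∃ K', K = K' + 1 := ⟨K - 1, by omega⟩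
      simp [pow_succ]
      ring
    rw [h2]
    calc (2:ℕ) ^ (20 * 10 ^ (K - 1)) = (2 ^ 20) ^ (10 ^ (K - 1)) := by
          rw [← pow_mul]
      _ ≤ (10 ^ 7) ^ (10 ^ (K - 1)) := Nat.pow_le_pow_left (by norm_num) _
      _ = 10 ^ (7 * 10 ^ (K - 1)) := by rw [← pow_mul]
  have : (10:ℕ) ^ (K * s.card) ≤ 10 ^ (7 * 10 ^ (K - 1)) := by
    rw [pow_mul]
    exact le_trans (le_trans hle1 hle2) (le_trans hle3 hle4)
  exact (Nat.pow_le_pow_iff_right (by norm_num : 1 < 10)).1 this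

lemma composite_filter_card {K : ℕ} (hK : 1 ≤ K) :
    ((Finset.Ico (10 ^ K) (2 * 10 ^ K)).filter pc).card
      = 10 ^ K - ((Finset.Ico (10 ^ K) (2 * 10 ^ K)).filter Nat.Prime).card := by
  have hfilter : (Finset.Ico (10 ^ K) (2 * 10 ^ K)).filter pc
      = (Finset.Ico (10 ^ K) (2 * 10 ^ K)).filter (fun a => ¬ a.Prime) := by
    refine Finset.filter_congr fun a ha => ?_
    rw [Finset.mem_Ico] at ha
    have h2 : 2 ≤ a := le_trans (by calc (2:ℕ) ≤ 10 ^ 1 := by norm_num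
      _ ≤ 10 ^ K := Nat.pow_le_pow_right (by norm_num) hK) ha.1
    unfold pc
    simp [h2]
  rw [hfilter]
  have := Finset.card_filter_add_card_filter_not
    (s := Finset.Ico (10 ^ K) (2 * 10 ^ K)) (p := Nat.Prime)
  rw [Nat.card_Ico] at this
  omega

lemma len_sum_eq {K : ℕ} (hK : 1 ≤ K) :
    ∑ a ∈ (Finset.Ico (10 ^ K) (2 * 10 ^ K)).filter pc, lenb 10 a
      = (K + 1) * ((Finset.Ico (10 ^ K) (2 * 10 ^ K)).filter pc).card := by
  have h : ∀ a ∈ (Finset.Ico (10 ^ K) (2 * 10 ^ K)).filter pc, lenb 10 a = K + 1 := by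
    intro a ha
    rw [Finset.mem_filter, Finset.mem_Ico] at ha
    refine lenb_eq ha.1.1 ?_
    have : 2 * 10 ^ K ≤ 10 ^ (K + 1) := by rw [pow_succ]; omega
    omega
  rw [Finset.sum_congr rfl h, Finset.sum_const, smul_eq_mul, mul_comm]

lemma len_sum_le (K : ℕ) :
    ∑ a ∈ (Finset.range (2 * 10 ^ K)).filter pc, lenb 10 a ≤ 2 * 10 ^ K * (K + 1) := by
  calc ∑ a ∈ (Finset.range (2 * 10 ^ K)).filter pc, lenb 10 a
      ≤ ∑ _a ∈ (Finset.range (2 * 10 ^ K)).filter pc, (K + 1) := by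
        refine Finset.sum_le_sum fun a ha => ?_
        rw [Finset.mem_filter, Finset.mem_range] at ha
        refine lenb_le ?_
        have : 2 * 10 ^ K ≤ 10 ^ (K + 1) := by rw [pow_succ]; omega
        omega
    _ = ((Finset.range (2 * 10 ^ K)).filter pc).card * (K + 1) := by
        rw [Finset.sum_const, smul_eq_mul]
    _ ≤ 2 * 10 ^ K * (K + 1) := by
        have := Finset.card_filter_le (Finset.range (2 * 10 ^ K)) pc
        rw [Finset.card_range] at this
        exact Nat.mul_le_mul_right _ this

lemma two_mul_lt_pow {K : ℕ} (hK : 1 ≤ K) : 2 * K + 2 < 10 ^ K := by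
  induction K, hK using Nat.le_induction with
  | base => norm_num
  | succ K hK ih =>
      have : 10 ^ (K + 1) = 10 * 10 ^ K := by rw [pow_succ]; ring
      omega

lemma count_pc_ge {K : ℕ} (hK : 1 ≤ K) : K ≤ Nat.count pc (10 ^ K) := by
  rw [Nat.count_eq_card_filter_range]
  have himg : (Finset.range K).image (fun k => 2 * k + 4) ⊆ (Finset.range (10 ^ K)).filter pc := by
    intro x hx
    rw [Finset.mem_image] at hx
    obtain ⟨k, hk, rfl⟩ := hx
    rw [Finset.mem_range] at hk
    rw [Finset.mem_filter, Finset.mem_range]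
    have h2 := two_mul_lt_pow hK
    refine ⟨by omega, by omega, ?_⟩
    have : 2 * k + 4 = 2 * (k + 2) := by ring
    rw [this]
    exact Nat.not_prime_mul (by omega) (by omega)
  have hinj : Set.InjOn (fun k => 2 * k + 4) (Finset.range K) := by
    intro x _ y _ h
    simp only at h
    omega
  calc K = (Finset.range K).card := (Finset.card_range K).symm
    _ = ((Finset.range K).image (fun k => 2 * k + 4)).card := (Finset.card_image_of_injOn hinj).symm
    _ ≤ _ := Finset.card_le_card himg

lemma sum_range_split (f : ℕ → ℕ) {N1 N2 : ℕ} (h : N1 ≤ N2) :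
    ∑ n ∈ Finset.range N2, f n
      = ∑ n ∈ Finset.range N1, f n + ∑ n ∈ Finset.Ico N1 N2, f n := by
  rw [Finset.range_eq_Ico, Finset.range_eq_Ico]
  exact (Finset.sum_Ico_consecutive f (Nat.zero_le N1) h).symm

lemma sum_filter_split (f : ℕ → ℕ) {M1 M2 : ℕ} (h : M1 ≤ M2) :
    ∑ a ∈ (Finset.range M2).filter pc, f a
      = ∑ a ∈ (Finset.range M1).filter pc, f a
        + ∑ a ∈ (Finset.Ico M1 M2).filter pc, f a := by
  rw [Finset.sum_filter, Finset.sum_filter, Finset.sum_filter]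
  exact sum_range_split _ h

lemma cube_bound {K : ℕ} (hK : 15 ≤ K) : 128 * (K + 1) ^ 3 ≤ 10 ^ (K - 8) := by
  induction K, hK using Nat.le_induction with
  | base => norm_num
  | succ K hK ih =>
      have hKK : K ≤ K * K := Nat.le_mul_of_pos_left K (by omega)
      have h15 : 15 * (K * K) ≤ K * (K * K) := Nat.mul_le_mul_right _ hK
      have h1 : (K + 2) ^ 3 ≤ 2 * (K + 1) ^ 3 := by nlinarith
      have h2 : 10 ^ (K + 1 - 8) = 10 * 10 ^ (K - 8) := by
        have : K + 1 - 8 = (K - 8) + 1 := by omega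
        rw [this, pow_succ]; ring
      calc 128 * (K + 1 + 1) ^ 3 ≤ 2 * (128 * (K + 1) ^ 3) := by
            have : (K + 1 + 1) = K + 2 := by ring
            rw [this]
            omega
        _ ≤ 2 * 10 ^ (K - 8) := by omega
        _ ≤ 10 ^ (K + 1 - 8) := by omega

lemma loglog_pos {n : ℕ} (hn : 3 ≤ n) : 0 < Real.log (Real.log n) := by
  have h3 : (3:ℝ) ≤ n := by exact_mod_cast hn
  have hexp : Real.exp 1 < n := lt_of_lt_of_le (lt_of_lt_of_le Real.exp_one_lt_d9 (by norm_num)) h3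
  have hlog1 : 1 < Real.log n := (Real.lt_log_iff_exp_lt (by linarith)).2 hexp
  exact Real.log_pos hlog1

lemma E_pos {n : ℕ} (hn : 3 ≤ n) : 0 < Real.sqrt (2 * n * Real.log (Real.log n)) := by
  apply Real.sqrt_pos.2
  have h1 := loglog_pos hn
  have h2 : (0:ℝ) < n := by positivity
  positivity

lemma E_fourth_le {n : ℕ} (hn : 3 ≤ n) :
    Real.sqrt (2 * n * Real.log (Real.log n)) ^ 4 ≤ 16 * (n : ℝ) ^ 3 := by
  have hn0 : (0:ℝ) < n := by positivity
  have hx0 : (0:ℝ) ≤ 2 * n * Real.log (Real.log n) := by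
    have := loglog_pos hn
    positivity
  have hsq : Real.sqrt (2 * n * Real.log (Real.log n)) ^ 2
      = 2 * n * Real.log (Real.log n) := Real.sq_sqrt hx0
  have h4 : Real.sqrt (2 * n * Real.log (Real.log n)) ^ 4
      = (2 * n * Real.log (Real.log n)) ^ 2 := by
    rw [show 4 = 2 * 2 by norm_num, pow_mul, hsq]
  rw [h4]
  -- log log n ≤ log n ≤ 2 √n
  have hlogn_pos : 0 < Real.log n := by
    apply Real.log_pos
    have : (3:ℝ) ≤ n := by exact_mod_cast hn
    linarith
  have h1 : Real.log (Real.log n) ≤ Real.log n := Real.log_le_self hlogn_pos.le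
  have hsqrt_pos : 0 < Real.sqrt n := Real.sqrt_pos.2 hn0
  have h2 : Real.log n ≤ 2 * Real.sqrt n := by
    have hls : Real.log (Real.sqrt n) = Real.log n / 2 := Real.log_sqrt hn0.le
    have := Real.log_le_sub_one_of_pos hsqrt_pos
    rw [hls] at this
    linarith
  have hx_le : 2 * n * Real.log (Real.log n) ≤ 4 * n * Real.sqrt n := by
    have hll : Real.log (Real.log n) ≤ 2 * Real.sqrt n := le_trans h1 h2
    have h2n : (0:ℝ) ≤ 2 * n := by positivity
    calc 2 * n * Real.log (Real.log n) ≤ 2 * n * (2 * Real.sqrt n) :=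
          mul_le_mul_of_nonneg_left hll h2n
      _ = 4 * n * Real.sqrt n := by ring
  have hsn : Real.sqrt n ^ 2 = (n:ℝ) := Real.sq_sqrt hn0.le
  calc (2 * n * Real.log (Real.log n)) ^ 2 ≤ (4 * n * Real.sqrt n) ^ 2 := by
        apply pow_le_pow_left₀ hx0 hx_le
    _ = 16 * (n:ℝ)^2 * Real.sqrt n ^ 2 := by ring
    _ = 16 * (n:ℝ)^3 := by rw [hsn]; ring


lemma dev_bound {ξ : ℝ} {M : ℕ}
    (hM : ∀ n, M ≤ n → snRatio 10 ξ 0 n < 1 ∧ -1 < snRatio 10 ξ 0 n)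
    {n : ℕ} (hn : M ≤ n) (h3 : 3 ≤ n) :
    |(digCount 10 ξ 0 n : ℝ) - (n : ℝ) / ((10:ℕ) : ℝ)|
      < Real.sqrt (2 * n * Real.log (Real.log n)) := by
  obtain ⟨hu, hl⟩ := hM n hn
  have hE := E_pos h3
  unfold snRatio at hu hl
  rw [abs_lt]
  constructor
  · have h2 := mul_lt_mul_of_pos_right hl hE
    rw [div_mul_cancel₀ _ hE.ne'] at h2
    linarith
  · exact (div_lt_one hE).1 hu

set_option maxHeartbeats 4000000 in
lemma not_ssn : ¬ SimplyStronglyNormal 10 (xiReal 10 1 Bc) := by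
  intro h
  obtain ⟨hsup, hinf⟩ := h 0 (by norm_num)
  have h9 : ((10:ℕ) : ℝ) - 1 = 9 := by norm_num
  have hsq3 : Real.sqrt (((10:ℕ) : ℝ) - 1) = 3 := by
    rw [h9, show (9:ℝ) = 3 ^ 2 by norm_num, Real.sqrt_sq (by norm_num : (0:ℝ) ≤ 3)]
  have hval : Real.sqrt (((10:ℕ) : ℝ) - 1) / ((10:ℕ) : ℝ) = 3 / 10 := by
    rw [hsq3]; norm_num
  -- eventual two-sided bound on snRatio
  have hup : ∀ᶠ n in Filter.atTop,
      ((snRatio 10 (xiReal 10 1 Bc) 0 n : ℝ) : EReal) < ((1:ℝ) : EReal) := by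
    refine Filter.eventually_lt_of_limsup_lt ?_ (by isBoundedDefault)
    rw [hsup, hval]
    exact_mod_cast (by norm_num : (3/10 : ℝ) < 1)
  have hlo : ∀ᶠ n in Filter.atTop,
      ((-1:ℝ) : EReal) < ((snRatio 10 (xiReal 10 1 Bc) 0 n : ℝ) : EReal) := by
    refine Filter.eventually_lt_of_lt_liminf ?_ (by isBoundedDefault)
    rw [hinf, hval]
    exact_mod_cast (by norm_num : (-1 : ℝ) < -(3/10))
  obtain ⟨M, hM⟩ := Filter.eventually_atTop.1 (hup.and hlo)
  have hM' : ∀ n, M ≤ n → snRatio 10 (xiReal 10 1 Bc) 0 n < 1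
      ∧ -1 < snRatio 10 (xiReal 10 1 Bc) 0 n := by
    intro n hn
    obtain ⟨h1, h2⟩ := hM n hn
    exact ⟨by exact_mod_cast h1, by exact_mod_cast h2⟩
  -- choose K and set up quantities (opaque)
  obtain ⟨K, hK⟩ : ∃ K, K = M + 15 := ⟨_, rfl⟩
  have hK15 : 15 ≤ K := by omega
  have hK1 : 1 ≤ K := by omega
  obtain ⟨M1, hM1⟩ : ∃ x, x = 10 ^ K := ⟨_, rfl⟩
  obtain ⟨M2, hM2⟩ : ∃ x, x = 2 * 10 ^ K := ⟨_, rfl⟩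
  have hM12 : M1 ≤ M2 := by
    have : (0:ℕ) < 10 ^ K := by positivity
    omega
  obtain ⟨N1, hN1⟩ : ∃ x, x = Nat.count pc M1 := ⟨_, rfl⟩
  obtain ⟨N2, hN2⟩ : ∃ x, x = Nat.count pc M2 := ⟨_, rfl⟩
  obtain ⟨n1, hn1⟩ : ∃ x, x = (prefixDigits 10 1 Bc N1).length := ⟨_, rfl⟩
  obtain ⟨n2, hn2⟩ : ∃ x, x = (prefixDigits 10 1 Bc N2).length := ⟨_, rfl⟩
  obtain ⟨C1, hC1⟩ : ∃ x, x = digCount 10 (xiReal 10 1 Bc) 0 n1 := ⟨_, rfl⟩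
  obtain ⟨C2, hC2⟩ : ∃ x, x = digCount 10 (xiReal 10 1 Bc) 0 n2 := ⟨_, rfl⟩
  obtain ⟨Zs, hZs⟩ : ∃ x, x = ∑ a ∈ (Finset.Ico M1 M2).filter pc,
      (Nat.digits 10 a).count 0 := ⟨_, rfl⟩
  obtain ⟨Ds, hDs⟩ : ∃ x, x = ∑ a ∈ (Finset.Ico M1 M2).filter pc, lenb 10 a := ⟨_, rfl⟩
  obtain ⟨pi, hpi⟩ : ∃ x, x = ((Finset.Ico M1 M2).filter Nat.Prime).card := ⟨_, rfl⟩
  obtain ⟨cC, hcC⟩ : ∃ x, x = ((Finset.Ico M1 M2).filter pc).card := ⟨_, rfl⟩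
  -- structural identities
  have hC1eq : C1 = ∑ a ∈ (Finset.range M1).filter pc, (Nat.digits 10 a).count 0 := by
    rw [hC1, hn1, digCount_prefixLen, hN1]
    exact sum_nth_eq (fun a => (Nat.digits 10 a).count 0) M1
  have hC2eq : C2 = ∑ a ∈ (Finset.range M2).filter pc, (Nat.digits 10 a).count 0 := by
    rw [hC2, hn2, digCount_prefixLen, hN2]
    exact sum_nth_eq (fun a => (Nat.digits 10 a).count 0) M2
  have hC2C1 : C2 = C1 + Zs := by
    rw [hC2eq, hC1eq, hZs, sum_filter_split _ hM12]
  have hn1eq : n1 = ∑ a ∈ (Finset.range M1).filter pc, lenb 10 a := by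
    rw [hn1, prefixDigits_length, hN1]
    exact sum_nth_eq (fun a => lenb 10 a) M1
  have hn2eq : n2 = ∑ a ∈ (Finset.range M2).filter pc, lenb 10 a := by
    rw [hn2, prefixDigits_length, hN2]
    exact sum_nth_eq (fun a => lenb 10 a) M2
  have hn2n1 : n2 = n1 + Ds := by
    rw [hn2eq, hn1eq, hDs, sum_filter_split _ hM12]
  have hDseq : Ds = (K + 1) * cC := by
    rw [hDs, hcC, hM1, hM2]
    exact len_sum_eq hK1
  have hcCeq : cC = 10 ^ K - pi := by
    rw [hcC, hpi, hM1, hM2]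
    exact composite_filter_card hK1
  have hpile : pi ≤ 10 ^ K := by
    have h1 : pi ≤ (Finset.Ico M1 M2).card := hpi ▸ Finset.card_filter_le _ _
    rw [Nat.card_Ico] at h1
    omega
  have hZsle : Zs ≤ K * 10 ^ (K - 1) := by
    rw [hZs, hM1, hM2]
    exact zeros_sum_le hK1
  have hKpi : K * pi ≤ 7 * 10 ^ (K - 1) := by
    rw [hpi, hM1, hM2]
    exact prime_card_bound hK1
  have hpihalf : 2 * pi ≤ 10 ^ (K - 1) := by
    have : 14 * pi ≤ K * pi := Nat.mul_le_mul_right _ (by omega)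
    omega
  have hn2le : n2 ≤ 2 * 10 ^ K * (K + 1) := by
    rw [hn2eq, hM2]
    exact len_sum_le K
  have hn1ge : K ≤ n1 := by
    have h1 : N1 ≤ (prefixDigits 10 1 Bc N1).length := le_prefixDigits_length N1
    rw [← hn1] at h1
    have h2 : K ≤ Nat.count pc M1 := by rw [hM1]; exact count_pc_ge hK1
    rw [← hN1] at h2
    omega
  have hn1M : M ≤ n1 := by omega
  have hn13 : 3 ≤ n1 := by omega
  have hn12 : n1 ≤ n2 := by omega
  -- deviation bounds
  have hdev1 := dev_bound hM' hn1M hn13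
  have hdev2 := dev_bound hM' (by omega : M ≤ n2) (by omega : 3 ≤ n2)
  rw [← hC1] at hdev1
  rw [← hC2] at hdev2
  -- E bounds
  have hEb : ∀ n : ℕ, 3 ≤ n → n ≤ 2 * 10 ^ K * (K + 1) →
      Real.sqrt (2 * n * Real.log (Real.log n)) ≤ (10:ℝ) ^ (K - 2) := by
    intro n h3 hle
    have h4 := E_fourth_le h3
    have hcast : (n : ℝ) ≤ 2 * (10:ℝ) ^ K * ((K:ℝ) + 1) := by
      calc (n : ℝ) ≤ ((2 * 10 ^ K * (K + 1) : ℕ) : ℝ) := by exact_mod_cast hle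
        _ = 2 * (10:ℝ) ^ K * ((K:ℝ) + 1) := by push_cast; ring
    have hn0 : (0:ℝ) ≤ n := by positivity
    have hcube : ((128 * (K + 1) ^ 3 : ℕ) : ℝ) ≤ ((10 ^ (K - 8) : ℕ) : ℝ) := by
      exact_mod_cast cube_bound hK15
    have hcube' : 128 * ((K:ℝ) + 1) ^ 3 ≤ (10:ℝ) ^ (K - 8) := by
      push_cast at hcube
      convert hcube using 2 <;> norm_num
    have h5 : 16 * (n:ℝ) ^ 3 ≤ ((10:ℝ) ^ (K - 2)) ^ 4 := by
      have e1 : ((10:ℝ) ^ (K - 2)) ^ 4 = (10:ℝ) ^ (4 * K - 8) := by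
        rw [← pow_mul]; congr 1; omega
      have e2 : (10:ℝ) ^ (4 * K - 8) = (10:ℝ) ^ (K - 8) * (10:ℝ) ^ (3 * K) := by
        rw [← pow_add]; congr 1; omega
      have e3 : 16 * (n:ℝ) ^ 3 ≤ 16 * (2 * (10:ℝ) ^ K * ((K:ℝ) + 1)) ^ 3 := by
        have := pow_le_pow_left₀ hn0 hcast 3
        linarith
      have e4 : 16 * (2 * (10:ℝ) ^ K * ((K:ℝ) + 1)) ^ 3
          = (128 * ((K:ℝ) + 1) ^ 3) * (10:ℝ) ^ (3 * K) := by
        rw [show (3:ℕ) * K = K * 3 by ring, pow_mul]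
        ring
      have e5 : (128 * ((K:ℝ) + 1) ^ 3) * (10:ℝ) ^ (3 * K)
          ≤ (10:ℝ) ^ (K - 8) * (10:ℝ) ^ (3 * K) :=
        mul_le_mul_of_nonneg_right hcube' (by positivity)
      rw [e1, e2]
      calc 16 * (n:ℝ) ^ 3 ≤ 16 * (2 * (10:ℝ) ^ K * ((K:ℝ) + 1)) ^ 3 := e3
        _ = (128 * ((K:ℝ) + 1) ^ 3) * (10:ℝ) ^ (3 * K) := e4
        _ ≤ _ := e5
    have h6 : Real.sqrt (2 * n * Real.log (Real.log n)) ^ 4 ≤ ((10:ℝ) ^ (K - 2)) ^ 4 :=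
      le_trans h4 h5
    exact le_of_pow_le_pow_left₀ (by norm_num) (by positivity) h6
  have hE1 := hEb n1 hn13 (by omega)
  have hE2 := hEb n2 (by omega) hn2le
  -- cast to reals and conclude
  have a1 : (C2 : ℝ) = C1 + Zs := by exact_mod_cast hC2C1
  have a2 : (n2 : ℝ) = n1 + ((K:ℝ) + 1) * ((10:ℝ) ^ K - pi) := by
    have h0 : (n2 : ℝ) = n1 + ((K + 1 : ℕ) : ℝ) * (((10 ^ K - pi : ℕ)) : ℝ) := by
      rw [hn2n1, hDseq, hcCeq]; push_cast; ring
    rw [h0, Nat.cast_sub hpile]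
    push_cast; ring
  have a3 : (Zs : ℝ) ≤ (K:ℝ) * (10:ℝ) ^ (K - 1) := by exact_mod_cast hZsle
  have a4 : (K:ℝ) * pi ≤ 7 * (10:ℝ) ^ (K - 1) := by exact_mod_cast hKpi
  have a5 : 2 * (pi:ℝ) ≤ (10:ℝ) ^ (K - 1) := by exact_mod_cast hpihalf
  have a8 : (10:ℝ) ^ K = 10 * (10:ℝ) ^ (K - 1) := by
    rw [← pow_succ']; congr 1; omega
  have a9 : (10:ℝ) ^ (K - 1) = 10 * (10:ℝ) ^ (K - 2) := by
    rw [← pow_succ']; congr 1; omega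
  have a10 : (K:ℝ) * (10:ℝ) ^ K = 10 * ((K:ℝ) * (10:ℝ) ^ (K - 1)) := by
    rw [a8]; ring
  have hZpos : (0:ℝ) < (10:ℝ) ^ (K - 2) := by positivity
  have hb1 : (C1 : ℝ) < n1 / 10 + (10:ℝ) ^ (K - 2) := by
    have h1 := (abs_lt.1 hdev1).2
    have h10 : ((10:ℕ) : ℝ) = 10 := by norm_num
    rw [h10] at h1
    linarith
  have hb2 : (n2 : ℝ) / 10 - (10:ℝ) ^ (K - 2) < C2 := by
    have h1 := (abs_lt.1 hdev2).1
    have h10 : ((10:ℕ) : ℝ) = 10 := by norm_num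
    rw [h10] at h1
    linarith
  have a2' : (n2 : ℝ) = n1 + (K:ℝ) * (10:ℝ) ^ K + (10:ℝ) ^ K - (K:ℝ) * pi - pi := by
    rw [a2]; ring
  linarith [a1, a2', a3, a4, a5, a8, a9, a10, hZpos, hb1, hb2]

theorem not_sn : ¬ StronglyNormal 10 (xiReal 10 1 Bc) := by
  intro h
  have h1 := h 1 le_rfl
  rw [pow_one] at h1
  exact not_ssn h1

/-- **Corollary.** The number `0.46891012141516182021222425…`, obtained by concatenating
the decimal digits of the composite positive integers, is not simply strongly normal
(hence not strongly normal) to the base `10`. -/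
theorem composite_concatenation_not_stronglyNormal :
    ¬ SimplyStronglyNormal 10 (xiReal 10 1 {n : ℕ | 2 ≤ n ∧ ¬ n.Prime}) ∧
      ¬ StronglyNormal 10 (xiReal 10 1 {n : ℕ | 2 ≤ n ∧ ¬ n.Prime}) :=
  ⟨not_ssn, not_sn⟩
end

section
/- Let c ≥ 1 be a real number and b ≥ 2, k ≥ 1 integers. Let d_{b,c,k} denote the total number of base-b digits in the concatenation, for n = 1, 2, ..., 2b^{k-1} - 1, of the base-b digit string of n repeated ⌊c^{ℓ_b(n)}⌋ times, where ℓ_b(n) is the number of base-b digits of n. Then d_{b,c,k} = ⌊c^k⌋·k·b^{k-1} + Σ_{n=1}^{k-1} ⌊c^n⌋·n·b^{n-1}·(b-1). -/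
open Filter

lemma lenb_eq_s2 (b : ℕ) (hb : 2 ≤ b) (m n : ℕ) (h1 : b ^ m ≤ n) (h2 : n < b ^ (m + 1)) :
    lenb b n = m + 1 := by
  have hpow : 1 ≤ b ^ m := Nat.one_le_pow _ _ (by omega)
  have hn : n ≠ 0 := by omega
  unfold lenb
  rw [Nat.digits_len b n hb hn, Nat.log_eq_of_pow_le_of_lt_pow h1 h2]

lemma aux_sum_len (b : ℕ) (hb : 2 ≤ b) (c : ℝ) (K : ℕ) :
    ∑ n ∈ Finset.Ico 1 (b ^ K), ⌊c ^ lenb b n⌋₊ * lenb b n =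
      ∑ m ∈ Finset.Icc 1 K, ⌊c ^ m⌋₊ * m * b ^ (m - 1) * (b - 1) := by
  induction K with
  | zero => simp
  | succ K ih =>
    have hb1 : 1 ≤ b ^ K := Nat.one_le_pow _ _ (by omega)
    have hble : b ^ K ≤ b ^ (K + 1) := Nat.pow_le_pow_right (by omega) (by omega)
    rw [← Finset.sum_Ico_consecutive _ hb1 hble, ih]
    have hconst : ∑ n ∈ Finset.Ico (b ^ K) (b ^ (K + 1)), ⌊c ^ lenb b n⌋₊ * lenb b n =
        (b ^ (K + 1) - b ^ K) * (⌊c ^ (K + 1)⌋₊ * (K + 1)) := by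
      have heq : ∀ n ∈ Finset.Ico (b ^ K) (b ^ (K + 1)), ⌊c ^ lenb b n⌋₊ * lenb b n
          = ⌊c ^ (K + 1)⌋₊ * (K + 1) := by
        intro n hn
        simp only [Finset.mem_Ico] at hn
        rw [lenb_eq_s2 b hb K n hn.1 hn.2]
      rw [Finset.sum_congr rfl heq, Finset.sum_const, Nat.card_Ico, smul_eq_mul]
    rw [hconst, Finset.sum_Icc_succ_top (by omega)]
    have hcard : b ^ (K + 1) - b ^ K = b ^ K * (b - 1) := by
      rw [pow_succ, Nat.mul_sub_one]
    rw [hcard]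
    have : K + 1 - 1 = K := by omega
    rw [this]
    ring

/-- **Lemma 2.1, first assertion.** The closed formula for `d_{b,c,k}`. -/
theorem dTotal_eq_formula (b k : ℕ) (hb : 2 ≤ b) (hk : 1 ≤ k) (c : ℝ) (hc : 1 ≤ c) :
    dTotal b c k =
      ⌊c ^ k⌋₊ * k * b ^ (k - 1) +
        ∑ n ∈ Finset.Icc 1 (k - 1), ⌊c ^ n⌋₊ * n * b ^ (n - 1) * (b - 1) := by
  unfold dTotal
  have hbk : 1 ≤ b ^ (k - 1) := Nat.one_le_pow _ _ (by omega)
  have hicc : Finset.Icc 1 (2 * b ^ (k - 1) - 1) = Finset.Ico 1 (2 * b ^ (k - 1)) := by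
    rw [← Finset.Ico_add_one_right_eq_Icc]
    congr 1
    omega
  rw [hicc]
  have h1 : (1 : ℕ) ≤ b ^ (k - 1) := hbk
  have h2 : b ^ (k - 1) ≤ 2 * b ^ (k - 1) := by omega
  rw [← Finset.sum_Ico_consecutive _ h1 h2, aux_sum_len b hb c (k - 1)]
  have h2b : 2 * b ^ (k - 1) ≤ b ^ k := by
    calc 2 * b ^ (k - 1) ≤ b * b ^ (k - 1) := Nat.mul_le_mul_right _ hb
    _ = b ^ k := by
      rw [← pow_succ']
      congr 1
      omega
  have hconst : ∑ n ∈ Finset.Ico (b ^ (k - 1)) (2 * b ^ (k - 1)), ⌊c ^ lenb b n⌋₊ * lenb b n =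
      b ^ (k - 1) * (⌊c ^ k⌋₊ * k) := by
    have heq : ∀ n ∈ Finset.Ico (b ^ (k - 1)) (2 * b ^ (k - 1)), ⌊c ^ lenb b n⌋₊ * lenb b n
        = ⌊c ^ k⌋₊ * k := by
      intro n hn
      simp only [Finset.mem_Ico] at hn
      have hlen : lenb b n = k := by
        have := lenb_eq_s2 b hb (k - 1) n hn.1 (by
          have : k - 1 + 1 = k := by omega
          rw [this]; omega)
        omega
      rw [hlen]
    rw [Finset.sum_congr rfl heq, Finset.sum_const, Nat.card_Ico]
    congr 1
    omega
  rw [hconst]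
  ring
end

section
/- Let c ≥ 1 be a real number and b ≥ 2 an integer, and for integers k ≥ 1 let d_{b,c,k} = ⌊c^k⌋·k·b^{k-1} + Σ_{n=1}^{k-1} ⌊c^n⌋·n·b^{n-1}·(b-1). Then there exists a constant C > 0 such that for all k ≥ 1, |d_{b,c,k} - ((cb + b - 2)/(b(cb-1)))·k·(cb)^k| ≤ C·(cb)^k. -/
open Filter

lemma aux_sum (x : ℝ) (hx : x ≠ 1) (k : ℕ) :
    ∑ n ∈ Finset.range k, (n:ℝ) * x^n
      = (x - k*x^k + ((k:ℝ)-1)*x^(k+1))/(x-1)^2 := by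
  induction k with
  | zero => simp
  | succ j ih =>
    rw [Finset.sum_range_succ, ih]
    have h1 : x - 1 ≠ 0 := sub_ne_zero.mpr hx
    push_cast
    field_simp
    ring


lemma aux_S (b : ℕ) (hb : 2 ≤ b) (c : ℝ) (hc : 1 ≤ c) (j : ℕ) :
    (c^(j+1)*((j:ℝ)+1)*(b:ℝ)^j
      + ∑ n ∈ Finset.Icc 1 j, c^n*(n:ℝ)*(b:ℝ)^(n-1)*((b:ℝ)-1))
    - (c*b + b - 2)/((b:ℝ)*(c*b-1)) * ((j:ℝ)+1) * (c*b)^(j+1)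
    = ((b:ℝ)-1)/b * ((c*b - (c*b)^(j+2))/(c*b-1)^2) := by
  have hb0 : (0:ℝ) < b := by positivity
  have hb2 : (2:ℝ) ≤ b := by exact_mod_cast hb
  have hx1 : (1:ℝ) < c*b := by nlinarith
  have hxne : c*b ≠ 1 := ne_of_gt hx1
  have hre : ∀ i ∈ Finset.range j,
      c^(1+i)*((1+i:ℕ):ℝ)*(b:ℝ)^((1+i)-1)*((b:ℝ)-1)
        = (c*((b:ℝ)-1)) * ((i:ℝ)*(c*b)^i) + (c*((b:ℝ)-1)) * (c*b)^i := by
    intro i _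
    simp only [Nat.add_sub_cancel_left]
    push_cast
    ring
  rw [← Finset.Ico_add_one_right_eq_Icc, Finset.sum_Ico_eq_sum_range]
  simp only [Nat.add_sub_cancel]
  rw [Finset.sum_congr rfl hre, Finset.sum_add_distrib, ← Finset.mul_sum, ← Finset.mul_sum,
    aux_sum _ hxne, geom_sum_eq hxne]
  have h1 : c*b - 1 ≠ 0 := sub_ne_zero.mpr hxne
  field_simp
  ring

lemma aux_err (b : ℕ) (hb : 2 ≤ b) (c : ℝ) (hc : 1 ≤ c) :
    ∃ C1 : ℝ, 0 ≤ C1 ∧ ∀ j : ℕ,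
      |(dFormula b c (j+1) : ℝ) -
        (c^(j+1)*((j:ℝ)+1)*(b:ℝ)^j
          + ∑ n ∈ Finset.Icc 1 j, c^n*(n:ℝ)*(b:ℝ)^(n-1)*((b:ℝ)-1))| ≤ C1 * (c*b)^(j+1) := by
  have hb1 : 1 ≤ b := by omega
  have hb0 : (0:ℝ) < b := by positivity
  have hb2 : (2:ℝ) ≤ b := by exact_mod_cast hb
  have hbne : (b:ℝ) ≠ 1 := by norm_num; omega
  have hcast : ∀ j : ℕ, (dFormula b c (j+1) : ℝ)
      = (⌊c^(j+1)⌋₊:ℝ)*((j:ℝ)+1)*(b:ℝ)^j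
        + ∑ n ∈ Finset.Icc 1 j, (⌊c^n⌋₊:ℝ)*(n:ℝ)*(b:ℝ)^(n-1)*((b:ℝ)-1) := by
    intro j
    simp only [dFormula, Nat.add_sub_cancel]
    push_cast [Nat.cast_sub hb1]
    ring
  rcases eq_or_lt_of_le hc with rfl | h1
  · refine ⟨0, le_refl 0, fun j => ?_⟩
    simp [hcast j, Nat.floor_one, one_pow]
  · refine ⟨2/(c-1), div_nonneg (by norm_num) (by linarith), fun j => ?_⟩
    have hc0 : (0:ℝ) < c - 1 := by linarith
    have habs : ∀ n : ℕ, |(⌊c^n⌋₊:ℝ) - c^n| ≤ 1 := by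
      intro n
      have h0 : (0:ℝ) ≤ c^n := by positivity
      have h2 := Nat.floor_le h0
      have h3 := Nat.sub_one_lt_floor (c^n)
      rw [abs_le]; constructor <;> linarith
    have hgeom : ∑ n ∈ Finset.Icc 1 j, ((b:ℝ)-1)*(b:ℝ)^(n-1) = (b:ℝ)^j - 1 := by
      rw [← Finset.Ico_add_one_right_eq_Icc, Finset.sum_Ico_eq_sum_range]
      simp only [Nat.add_sub_cancel, Nat.add_sub_cancel_left]
      rw [← Finset.mul_sum, geom_sum_eq hbne, mul_comm,
        div_mul_cancel₀ _ (sub_ne_zero.mpr hbne)]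
    have hD : (dFormula b c (j+1):ℝ) -
        (c^(j+1)*((j:ℝ)+1)*(b:ℝ)^j
          + ∑ n ∈ Finset.Icc 1 j, c^n*(n:ℝ)*(b:ℝ)^(n-1)*((b:ℝ)-1))
        = ((⌊c^(j+1)⌋₊:ℝ) - c^(j+1))*((j:ℝ)+1)*(b:ℝ)^j
          + ∑ n ∈ Finset.Icc 1 j, ((⌊c^n⌋₊:ℝ) - c^n)*(n:ℝ)*(b:ℝ)^(n-1)*((b:ℝ)-1) := by
      have h : ∀ n ∈ Finset.Icc 1 j,
          ((⌊c^n⌋₊:ℝ) - c^n)*(n:ℝ)*(b:ℝ)^(n-1)*((b:ℝ)-1)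
            = (⌊c^n⌋₊:ℝ)*(n:ℝ)*(b:ℝ)^(n-1)*((b:ℝ)-1)
              - c^n*(n:ℝ)*(b:ℝ)^(n-1)*((b:ℝ)-1) := fun n _ => by ring
      rw [Finset.sum_congr rfl h, Finset.sum_sub_distrib, hcast j]; ring
    rw [hD]
    have step1 : |((⌊c^(j+1)⌋₊:ℝ) - c^(j+1))*((j:ℝ)+1)*(b:ℝ)^j| ≤ ((j:ℝ)+1)*(b:ℝ)^j := by
      rw [abs_mul, abs_mul, abs_of_nonneg (by positivity : (0:ℝ) ≤ (j:ℝ)+1),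
        abs_of_nonneg (by positivity : (0:ℝ) ≤ (b:ℝ)^j)]
      calc |(⌊c^(j+1)⌋₊:ℝ) - c^(j+1)| * ((j:ℝ)+1) * (b:ℝ)^j
          ≤ 1 * ((j:ℝ)+1) * (b:ℝ)^j := by gcongr; exact habs (j+1)
        _ = ((j:ℝ)+1)*(b:ℝ)^j := by ring
    have step2 : |∑ n ∈ Finset.Icc 1 j, ((⌊c^n⌋₊:ℝ) - c^n)*(n:ℝ)*(b:ℝ)^(n-1)*((b:ℝ)-1)|
        ≤ ((j:ℝ)+1)*(b:ℝ)^j := by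
      calc |∑ n ∈ Finset.Icc 1 j, ((⌊c^n⌋₊:ℝ) - c^n)*(n:ℝ)*(b:ℝ)^(n-1)*((b:ℝ)-1)|
          ≤ ∑ n ∈ Finset.Icc 1 j, |((⌊c^n⌋₊:ℝ) - c^n)*(n:ℝ)*(b:ℝ)^(n-1)*((b:ℝ)-1)| :=
            Finset.abs_sum_le_sum_abs _ _
        _ ≤ ∑ n ∈ Finset.Icc 1 j, ((j:ℝ)+1)*(((b:ℝ)-1)*(b:ℝ)^(n-1)) := by
            apply Finset.sum_le_sum
            intro n hn
            have hnj : (n:ℝ) ≤ (j:ℝ)+1 := by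
              have h := (Finset.mem_Icc.mp hn).2
              have : (n:ℝ) ≤ (j:ℝ) := Nat.cast_le.mpr h
              linarith
            rw [abs_mul, abs_mul, abs_mul,
              abs_of_nonneg (by positivity : (0:ℝ) ≤ (n:ℝ)),
              abs_of_nonneg (by positivity : (0:ℝ) ≤ (b:ℝ)^(n-1)),
              abs_of_nonneg (by linarith : (0:ℝ) ≤ (b:ℝ)-1)]
            calc |(⌊c^n⌋₊:ℝ) - c^n| * (n:ℝ) * (b:ℝ)^(n-1) * ((b:ℝ)-1)
                ≤ 1 * ((j:ℝ)+1) * (b:ℝ)^(n-1) * ((b:ℝ)-1) := by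
                  gcongr <;> first | linarith | exact habs n
              _ = ((j:ℝ)+1)*(((b:ℝ)-1)*(b:ℝ)^(n-1)) := by ring
        _ = ((j:ℝ)+1)*((b:ℝ)^j - 1) := by rw [← Finset.mul_sum, hgeom]
        _ ≤ ((j:ℝ)+1)*(b:ℝ)^j := by nlinarith [pow_pos hb0 j]
    have hbern : ((j:ℝ)+1)*(c-1) ≤ c^(j+1) := by
      have h := one_add_mul_le_pow (by linarith : (-2:ℝ) ≤ c-1) (j+1)
      have hc' : 1 + (c-1) = c := by ring
      rw [hc'] at h
      push_cast at h
      linarith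
    calc |((⌊c^(j+1)⌋₊:ℝ) - c^(j+1))*((j:ℝ)+1)*(b:ℝ)^j
          + ∑ n ∈ Finset.Icc 1 j, ((⌊c^n⌋₊:ℝ) - c^n)*(n:ℝ)*(b:ℝ)^(n-1)*((b:ℝ)-1)|
        ≤ ((j:ℝ)+1)*(b:ℝ)^j + ((j:ℝ)+1)*(b:ℝ)^j :=
          le_trans (abs_add_le _ _) (add_le_add step1 step2)
      _ = 2*((j:ℝ)+1)*(b:ℝ)^j := by ring
      _ ≤ 2*((j:ℝ)+1)*(b:ℝ)^(j+1) := by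
          have hpow : (b:ℝ)^j ≤ (b:ℝ)^(j+1) := pow_le_pow_right₀ (by linarith) (Nat.le_succ j)
          have h0 : (0:ℝ) ≤ 2*((j:ℝ)+1) := by positivity
          nlinarith
      _ ≤ 2/(c-1) * (c*b)^(j+1) := by
          rw [mul_pow, div_mul_eq_mul_div, le_div_iff₀ hc0]
          calc 2*((j:ℝ)+1)*(b:ℝ)^(j+1)*(c-1) = 2*(b:ℝ)^(j+1)*(((j:ℝ)+1)*(c-1)) := by ring
            _ ≤ 2*(b:ℝ)^(j+1)*c^(j+1) := by
                have : (0:ℝ) ≤ 2*(b:ℝ)^(j+1) := by positivity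
                nlinarith
            _ = 2*(c^(j+1)*(b:ℝ)^(j+1)) := by ring

/-- **Lemma 2.1, second assertion.** Asymptotics of `d_{b,c,k}`:
`d_{b,c,k} = ((cb + b - 2)/(b(cb-1)))·k·(cb)^k·(1 + O(1/k))`. -/
theorem dFormula_asymptotics (b : ℕ) (hb : 2 ≤ b) (c : ℝ) (hc : 1 ≤ c) :
    ∃ C : ℝ, 0 < C ∧ ∀ k : ℕ, 1 ≤ k →
      |(dFormula b c k : ℝ) -
          (c * b + b - 2) / (b * (c * b - 1)) * k * (c * b) ^ k| ≤ C * (c * b) ^ k := by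
  obtain ⟨C1, hC1, hErr⟩ := aux_err b hb c hc
  have hb0 : (0:ℝ) < b := by positivity
  have hb2 : (2:ℝ) ≤ b := by exact_mod_cast hb
  have hx2 : (2:ℝ) ≤ c*b := by nlinarith
  have hx0 : (0:ℝ) < c*(b:ℝ) - 1 := by linarith
  refine ⟨C1 + (c*(b:ℝ))/(c*(b:ℝ)-1)^2 + 1, by positivity, fun k hk => ?_⟩
  obtain ⟨j, rfl⟩ : ∃ j, k = j + 1 := ⟨k - 1, by omega⟩
  have hS := aux_S b hb c hc j
  have hE := hErr j
  have hxp : (0:ℝ) < (c*(b:ℝ))^(j+1) := by positivity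
  have hp1 : (1:ℝ) ≤ (c*(b:ℝ))^(j+1) := one_le_pow₀ (by linarith)
  have hx12 : (c*(b:ℝ))^(j+2) = (c*(b:ℝ))*(c*(b:ℝ))^(j+1) := by rw [pow_succ, pow_succ]; ring
  have hSM : |(c^(j+1)*((j:ℝ)+1)*(b:ℝ)^j
        + ∑ n ∈ Finset.Icc 1 j, c^n*(n:ℝ)*(b:ℝ)^(n-1)*((b:ℝ)-1))
      - (c*b + b - 2)/((b:ℝ)*(c*b-1)) * ((j:ℝ)+1) * (c*b)^(j+1)|
      ≤ (c*(b:ℝ))/(c*(b:ℝ)-1)^2 * (c*(b:ℝ))^(j+1) := by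
    rw [hS]
    have hD2 : (0:ℝ) < (c*(b:ℝ)-1)^2 := by positivity
    have hnum : ((b:ℝ)-1)/b * ((c*b - (c*b)^(j+2))/(c*b-1)^2)
        = (((b:ℝ)-1)*(c*(b:ℝ) - (c*(b:ℝ))^(j+2)))/((b:ℝ)*(c*(b:ℝ)-1)^2) := by
      field_simp
    have hxx : c*(b:ℝ) ≤ (c*(b:ℝ))^(j+2) := by
      rw [hx12]; nlinarith
    rw [hnum, abs_div, abs_of_pos (by positivity : (0:ℝ) < (b:ℝ)*(c*(b:ℝ)-1)^2),
      abs_of_nonpos (by nlinarith : (((b:ℝ)-1)*(c*(b:ℝ) - (c*(b:ℝ))^(j+2))) ≤ 0),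
      div_le_iff₀ (by positivity : (0:ℝ) < (b:ℝ)*(c*(b:ℝ)-1)^2)]
    have h5 : -(((b:ℝ)-1)*(c*(b:ℝ) - (c*(b:ℝ))^(j+2))) ≤ (b:ℝ)*((c*(b:ℝ))^(j+2)) := by
      nlinarith
    have hright : c*(b:ℝ)/(c*(b:ℝ)-1)^2 * (c*(b:ℝ))^(j+1) * ((b:ℝ)*(c*(b:ℝ)-1)^2)
        = (b:ℝ)*((c*(b:ℝ))^(j+2)) := by
      rw [hx12]; field_simp
    linarith [h5, hright]
  have hcastk : ((j+1:ℕ):ℝ) = (j:ℝ)+1 := by push_cast; ring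
  rw [hcastk]
  calc |(dFormula b c (j+1) : ℝ) - (c*b + b - 2)/((b:ℝ)*(c*b-1)) * ((j:ℝ)+1) * (c*b)^(j+1)|
      = |((dFormula b c (j+1) : ℝ) -
          (c^(j+1)*((j:ℝ)+1)*(b:ℝ)^j
            + ∑ n ∈ Finset.Icc 1 j, c^n*(n:ℝ)*(b:ℝ)^(n-1)*((b:ℝ)-1)))
        + ((c^(j+1)*((j:ℝ)+1)*(b:ℝ)^j
            + ∑ n ∈ Finset.Icc 1 j, c^n*(n:ℝ)*(b:ℝ)^(n-1)*((b:ℝ)-1))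
          - (c*b + b - 2)/((b:ℝ)*(c*b-1)) * ((j:ℝ)+1) * (c*b)^(j+1))| := by
          rw [sub_add_sub_cancel]
    _ ≤ C1 * (c*b)^(j+1) + (c*(b:ℝ))/(c*(b:ℝ)-1)^2 * (c*(b:ℝ))^(j+1) :=
        le_trans (abs_add_le _ _) (add_le_add hE hSM)
    _ ≤ (C1 + (c*(b:ℝ))/(c*(b:ℝ)-1)^2 + 1) * (c*b)^(j+1) := by nlinarith
end

section
/- Let c ≥ 1 be a real number, b ≥ 2 an integer, A ⊆ ℕ a set of positive integers, and d_{b,c,k} the total number of base-b digits in the concatenation, for n = 1, ..., 2b^{k-1} − 1, of the base-b digit string of n repeated ⌊c^{ℓ_b(n)}⌋ times. Suppose there is a positive constant r such that for all sufficiently large k, m_{1,b}(ξ_{ℕ∖A,b,c}; d_{b,c,k}) − d_{b,c,k}/b ≥ r·(cb)^k. Then ξ_{ℕ∖A,b,c} is not simply strongly normal to the base b; in particular, it is not strongly normal to the base b. -/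
open Filter

set_option maxHeartbeats 1000000 in
/-- **Lemma 2.4.** If `m_{1,b}(ξ_{ℕ∖A,b,c}; d_{b,c,k}) - d_{b,c,k}/b ≥ r·(cb)^k` for some
`r > 0` and all large `k`, then `ξ_{ℕ∖A,b,c}` is not simply strongly normal to base `b`;
in particular it is not strongly normal to base `b`. -/
theorem not_stronglyNormal_of_excess_ones (b : ℕ) (hb : 2 ≤ b) (c : ℝ) (hc : 1 ≤ c)
    (A : Set ℕ) (hA : 0 ∉ A) (r : ℝ) (hr : 0 < r)
    (hyp : ∀ᶠ k : ℕ in Filter.atTop,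
      r * (c * b) ^ k ≤
        (digCount b (xiReal b c {n : ℕ | 0 < n ∧ n ∉ A}) 1 (dTotal b c k) : ℝ)
          - (dTotal b c k : ℝ) / b) :
    ¬ SimplyStronglyNormal b (xiReal b c {n : ℕ | 0 < n ∧ n ∉ A}) ∧
      ¬ StronglyNormal b (xiReal b c {n : ℕ | 0 < n ∧ n ∉ A}) := by
  
  set B : Set ℕ := {n : ℕ | 0 < n ∧ n ∉ A} with hB
  set ξ : ℝ := xiReal b c B with hξ
  have hb1 : 1 < b := hb
  have hbR : (2:ℝ) ≤ (b:ℝ) := by exact_mod_cast hb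
  have hcb2 : (2:ℝ) ≤ c * b := by nlinarith
  have hcb0 : (0:ℝ) < c * b := by linarith
  -- lower bound: dTotal b c k ≥ k   (for k ≥ 1)
  have hdlow : ∀ k : ℕ, 1 ≤ k → k ≤ dTotal b c k := by
    intro k hk
    have h1 : ∀ n ∈ Finset.Icc 1 (2 * b ^ (k - 1) - 1), 1 ≤ ⌊c ^ lenb b n⌋₊ * lenb b n := by
      intro n hn
      simp only [Finset.mem_Icc] at hn
      have hn1 : 1 ≤ n := hn.1
      have hlen : 1 ≤ lenb b n := by
        have h : Nat.digits b n ≠ [] := Nat.digits_ne_nil_iff_ne_zero.2 (by omega)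
        rw [lenb]
        exact List.length_pos_iff.2 h
      have hfl : 1 ≤ ⌊c ^ lenb b n⌋₊ := by
        rw [Nat.one_le_floor_iff]
        exact one_le_pow₀ hc
      exact Nat.one_le_iff_ne_zero.2 (Nat.mul_ne_zero (by omega) (by omega))
    have hcard : k ≤ 2 * b ^ (k - 1) - 1 := by
      have : k - 1 < b ^ (k - 1) := Nat.lt_pow_self hb1
      omega
    calc k = ∑ _n ∈ Finset.Icc 1 k, 1 := by simp
      _ ≤ ∑ n ∈ Finset.Icc 1 (2 * b ^ (k - 1) - 1), 1 := by
          apply Finset.sum_le_sum_of_subset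
          exact Finset.Icc_subset_Icc le_rfl hcard
      _ ≤ dTotal b c k := Finset.sum_le_sum h1
  -- upper bound: (dTotal b c k : ℝ) ≤ 2 * k * (c*b)^k   (for k ≥ 1)
  have hdup : ∀ k : ℕ, 1 ≤ k → (dTotal b c k : ℝ) ≤ 2 * k * (c * b) ^ k := by
    intro k hk
    have hterm : ∀ n ∈ Finset.Icc 1 (2 * b ^ (k - 1) - 1),
        ((⌊c ^ lenb b n⌋₊ * lenb b n : ℕ) : ℝ) ≤ c ^ k * k := by
      intro n hn
      simp only [Finset.mem_Icc] at hn
      have hn1 : 1 ≤ n := hn.1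
      have hnlt : n < b ^ k := by
        have h2 : 2 * b ^ (k - 1) ≤ b ^ k := by
          calc 2 * b ^ (k - 1) ≤ b * b ^ (k - 1) := by
                exact Nat.mul_le_mul_right _ hb
            _ = b ^ k := by
                rw [← pow_succ']
                congr 1
                omega
        omega
      have hlenk : lenb b n ≤ k := by
        have := (Nat.log_lt_iff_lt_pow hb1 (by omega : n ≠ 0)).2 hnlt
        rw [lenb, Nat.digits_len b n hb1 (by omega)]
        omega
      push_cast
      have h1 : (⌊c ^ lenb b n⌋₊ : ℝ) ≤ c ^ k := by
        refine le_trans (Nat.floor_le (by positivity)) ?_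
        exact pow_le_pow_right₀ hc hlenk
      have h2 : (lenb b n : ℝ) ≤ (k : ℝ) := by exact_mod_cast hlenk
      have h3 : (0:ℝ) ≤ (lenb b n : ℝ) := by positivity
      nlinarith [pow_pos (lt_of_lt_of_le one_pos hc) k]
    have hcards : ((Finset.Icc 1 (2 * b ^ (k - 1) - 1)).card : ℝ) ≤ 2 * (b:ℝ) ^ (k - 1) := by
      rw [Nat.card_Icc]
      have hpow : (1:ℕ) ≤ b ^ (k-1) := Nat.one_le_pow _ _ (by omega)
      have heq : 2 * b ^ (k - 1) - 1 + 1 - 1 = 2 * b ^ (k-1) - 1 := by omega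
      rw [heq]
      calc ((2 * b ^ (k-1) - 1 : ℕ) : ℝ) ≤ ((2 * b ^ (k-1) : ℕ) : ℝ) := by
            exact_mod_cast Nat.sub_le _ _
        _ = 2 * (b:ℝ) ^ (k-1) := by push_cast; ring
    have hck : (1:ℝ) ≤ c ^ k := one_le_pow₀ hc
    have hbk1 : (b:ℝ) ^ (k - 1) * (b:ℝ) ≤ (b:ℝ) ^ k * (b:ℝ) ^ 0 := by
      rw [← pow_succ, pow_zero, mul_one]
      apply pow_le_pow_right₀ (by linarith) (by omega)
    calc (dTotal b c k : ℝ)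
        = ∑ n ∈ Finset.Icc 1 (2 * b ^ (k - 1) - 1),
            ((⌊c ^ lenb b n⌋₊ * lenb b n : ℕ) : ℝ) := by
          rw [dTotal]; push_cast; ring_nf
      _ ≤ ∑ _n ∈ Finset.Icc 1 (2 * b ^ (k - 1) - 1), c ^ k * k :=
          Finset.sum_le_sum hterm
      _ = ((Finset.Icc 1 (2 * b ^ (k - 1) - 1)).card : ℝ) * (c ^ k * k) := by
          rw [Finset.sum_const, nsmul_eq_mul]
      _ ≤ 2 * (b:ℝ) ^ (k - 1) * (c ^ k * k) := by
          apply mul_le_mul_of_nonneg_right hcards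
          positivity
      _ ≤ 2 * k * (c * b) ^ k := by
          rw [mul_pow]
          have hk0 : (0:ℝ) ≤ (k:ℝ) := by positivity
          have h2 : (b:ℝ) ^ (k - 1) ≤ (b:ℝ) ^ k := by
            apply pow_le_pow_right₀ (by linarith) (by omega)
          nlinarith [mul_le_mul_of_nonneg_right h2
            (show (0:ℝ) ≤ c ^ k * k by positivity)]
  -- dTotal tends to infinity
  have hdtop : Filter.Tendsto (fun k => dTotal b c k) Filter.atTop Filter.atTop := by
    apply Filter.tendsto_atTop_mono' Filter.atTop
      (Filter.eventually_atTop.2 ⟨1, fun k hk => hdlow k hk⟩) Filter.tendsto_id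
  -- the key frequently claim
  have key : ∀ M : ℝ, ∃ᶠ n in Filter.atTop, M ≤ snRatio b ξ 1 n := by
    intro M
    set M' : ℝ := max M 1 with hM'
    have hM'1 : 1 ≤ M' := le_max_right _ _
    have hM'0 : 0 < M' := by linarith
    have hMM' : M ≤ M' := le_max_left _ _
    set D : ℝ := 2 + Real.log (c * b) with hD
    have hDpos : 0 < D := by
      have := Real.log_nonneg (by linarith : 1 ≤ c * b)
      linarith
    -- eventual bound from geometric decay
    have hgeo : ∀ᶠ k : ℕ in Filter.atTop,
        4 * M' ^ 2 * D * (k:ℝ) ^ 2 ≤ r ^ 2 * (c * b) ^ k := by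
      have hsum : Summable (fun n : ℕ => (n : ℝ) ^ 2 * ((c*b)⁻¹) ^ n) := by
        apply summable_pow_mul_geometric_of_norm_lt_one
        rw [Real.norm_eq_abs, abs_of_pos (by positivity)]
        rw [inv_lt_one_iff₀]
        right; linarith
      have htend := hsum.tendsto_atTop_zero
      have hε : (0:ℝ) < r ^ 2 / (4 * M' ^ 2 * D) := by positivity
      filter_upwards [htend.eventually (gt_mem_nhds hε)] with k hk
      have hpos : (0:ℝ) < (c*b) ^ k := by positivity
      have h2 : (k:ℝ) ^ 2 * ((c*b)⁻¹) ^ k * (c*b) ^ k <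
          r ^ 2 / (4 * M' ^ 2 * D) * (c*b) ^ k := by
        exact mul_lt_mul_of_pos_right hk hpos
      rw [mul_assoc, ← mul_pow, inv_mul_cancel₀ (by positivity), one_pow, mul_one] at h2
      rw [div_mul_eq_mul_div, lt_div_iff₀ (by positivity)] at h2
      nlinarith
    rw [Filter.frequently_atTop]
    intro N
    -- combine all eventual facts
    have hcomb : ∀ᶠ k : ℕ in Filter.atTop,
        (r * (c * b) ^ k ≤ (digCount b ξ 1 (dTotal b c k) : ℝ) - (dTotal b c k : ℝ) / b)
        ∧ 4 * M' ^ 2 * D * (k:ℝ) ^ 2 ≤ r ^ 2 * (c * b) ^ k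
        ∧ 3 ≤ k ∧ N ≤ dTotal b c k := by
      filter_upwards [hyp, hgeo, Filter.eventually_ge_atTop 3,
        hdtop.eventually_ge_atTop N] with k h1 h2 h3 h4
      exact ⟨h1, h2, h3, h4⟩
    obtain ⟨k, hk⟩ := hcomb.exists
    obtain ⟨hhyp, hgk, hk3, hkN⟩ := hk
    refine ⟨dTotal b c k, hkN, le_trans hMM' ?_⟩
    set n : ℕ := dTotal b c k with hn
    have hk1 : 1 ≤ k := by omega
    have hn3 : 3 ≤ n := le_trans hk3 (hdlow k hk1)
    have hnR : (3:ℝ) ≤ (n:ℝ) := by exact_mod_cast hn3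
    have hnpos : (0:ℝ) < n := by linarith
    -- log n > 1
    have hlog1 : 1 < Real.log n := by
      rw [Real.lt_log_iff_exp_lt hnpos]
      calc Real.exp 1 < 2.7182818286 := Real.exp_one_lt_d9
        _ ≤ (n:ℝ) := by linarith
    have hloglog : 0 < Real.log (Real.log n) := Real.log_pos hlog1
    -- bound: log n ≤ D * k
    have hnub : (n:ℝ) ≤ 2 * k * (c * b) ^ k := hdup k hk1
    have hlogn : Real.log n ≤ D * k := by
      have h1 : Real.log n ≤ Real.log (2 * k * (c * b) ^ k) :=
        Real.log_le_log hnpos hnub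
      have hk0 : (0:ℝ) < (k:ℝ) := by exact_mod_cast hk1
      have h2 : Real.log (2 * k * (c * b) ^ k)
          = Real.log 2 + Real.log k + k * Real.log (c * b) := by
        rw [Real.log_mul (by positivity) (by positivity),
          Real.log_mul (by norm_num) (by positivity), Real.log_pow]
      have h3 : Real.log 2 ≤ 1 := by
        have := Real.log_le_sub_one_of_pos (by norm_num : (0:ℝ) < 2)
        linarith
      have h4 : Real.log k ≤ k := by
        have := Real.log_le_sub_one_of_pos hk0
        linarith
      have h5 : (1:ℝ) ≤ (k:ℝ) := by exact_mod_cast hk1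
      rw [h2] at h1
      rw [hD]
      nlinarith [Real.log_nonneg (by linarith : 1 ≤ c * b)]
    have hloglogle : Real.log (Real.log n) ≤ D * k := by
      have := Real.log_le_sub_one_of_pos (by linarith : 0 < Real.log n)
      linarith
    -- the denominator
    set x : ℝ := 2 * n * Real.log (Real.log n) with hx
    have hxpos : 0 < x := mul_pos (by linarith) hloglog
    have hsq : 0 < Real.sqrt x := Real.sqrt_pos.2 hxpos
    -- bound on x
    have hk0 : (0:ℝ) < (k:ℝ) := by exact_mod_cast hk1
    have hxb : x ≤ 4 * D * k ^ 2 * (c * b) ^ k := by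
      have h1 : (0:ℝ) ≤ Real.log (Real.log n) := le_of_lt hloglog
      have hpowpos : (0:ℝ) < (c*b)^k := by positivity
      calc x = 2 * n * Real.log (Real.log n) := rfl
        _ ≤ 2 * (2 * k * (c * b) ^ k) * (D * k) := by
            apply mul_le_mul (by nlinarith) hloglogle h1 (by positivity)
        _ = 4 * D * k ^ 2 * (c * b) ^ k := by ring
    -- M' * sqrt x ≤ r * (c*b)^k
    have hrpow : (0:ℝ) < r * (c * b) ^ k := by positivity
    have hkey : M' * Real.sqrt x ≤ r * (c * b) ^ k := by
      have h1 : M' * Real.sqrt x = Real.sqrt (M' ^ 2 * x) := by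
        rw [Real.sqrt_mul (sq_nonneg _), Real.sqrt_sq hM'0.le]
      rw [h1]
      rw [show r * (c*b)^k = Real.sqrt ((r * (c*b)^k)^2) from
        (Real.sqrt_sq hrpow.le).symm]
      apply Real.sqrt_le_sqrt
      have hpowpos : (0:ℝ) < (c*b)^k := by positivity
      calc M' ^ 2 * x ≤ M' ^ 2 * (4 * D * k ^ 2 * (c * b) ^ k) := by
            apply mul_le_mul_of_nonneg_left hxb (sq_nonneg _)
        _ = (4 * M' ^ 2 * D * k ^ 2) * (c * b) ^ k := by ring
        _ ≤ (r ^ 2 * (c * b) ^ k) * (c * b) ^ k := by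
            apply mul_le_mul_of_nonneg_right hgk hpowpos.le
        _ = (r * (c*b)^k)^2 := by ring
    -- conclude
    rw [snRatio]
    rw [le_div_iff₀ hsq]
    calc M' * Real.sqrt (2 * n * Real.log (Real.log n)) = M' * Real.sqrt x := rfl
      _ ≤ r * (c * b) ^ k := hkey
      _ ≤ (digCount b ξ 1 n : ℝ) - (n:ℝ) / b := hhyp
  -- derive the contradiction with simple strong normality
  have hnotssn : ¬ SimplyStronglyNormal b ξ := by
    intro hssn
    obtain ⟨hsup, _⟩ := hssn 1 (by omega)
    set L : ℝ := Real.sqrt ((b:ℝ) - 1) / b with hL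
    have hfreq : ∃ᶠ n in Filter.atTop,
        ((L + 1 : ℝ) : EReal) ≤ (snRatio b ξ 1 n : EReal) := by
      apply (key (L + 1)).mono
      intro n hn
      exact_mod_cast hn
    have hle : ((L + 1 : ℝ) : EReal) ≤
        Filter.atTop.limsup (fun n : ℕ => (snRatio b ξ 1 n : EReal)) :=
      le_limsup_of_frequently_le hfreq
    rw [hsup] at hle
    have : L + 1 ≤ L := by exact_mod_cast hle
    linarith
  refine ⟨hnotssn, fun hsn => hnotssn ?_⟩
  have := hsn 1 le_rfl
  simpa using this
end

section
/- Let c ≥ 1 be a real number, b ≥ 2 an integer, A ⊆ ℕ a set of positive integers, and d_{b,c,k} the total number of base-b digits in the concatenation, for n = 1, ..., 2b^{k-1} − 1, of the base-b digit string of n repeated ⌊c^{ℓ_b(n)}⌋ times. If there is a positive constant r such that for all sufficiently large k, m_{1,b}(ξ_{ℕ∖A,b,c}; d_{b,c,k}) − d_{b,c,k}/b ≥ r·(cb)^k, then limsup_{n→∞} (m_{1,b}(ξ_{ℕ∖A,b,c}; n) − n/b)/√(2n log log n) = +∞. -/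
open Filter

lemma lenb_le_of_lt_pow {b : ℕ} (hb : 2 ≤ b) {n k : ℕ} (h : n < b ^ k) : lenb b n ≤ k := by
  rcases eq_or_ne n 0 with rfl | hn
  · simp [lenb]
  · have hb1 : 1 < b := by omega
    have hlog := (Nat.log_lt_iff_lt_pow hb1 hn).2 h
    rw [lenb, Nat.digits_len b n hb1 hn]
    omega

lemma dTotal_lower (b : ℕ) (c : ℝ) (hc : 1 ≤ c) (k : ℕ) :
    2 * b ^ (k - 1) - 1 ≤ dTotal b c k := by
  have h : ∀ n ∈ Finset.Icc 1 (2 * b ^ (k - 1) - 1),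
      1 ≤ ⌊c ^ lenb b n⌋₊ * lenb b n := by
    intro n hn
    simp only [Finset.mem_Icc] at hn
    have hn0 : n ≠ 0 := by omega
    have hl : 1 ≤ lenb b n := by
      have : Nat.digits b n ≠ [] := Nat.digits_ne_nil_iff_ne_zero.2 hn0
      have := List.length_pos_iff.2 this
      simpa [lenb, Nat.one_le_iff_ne_zero, Nat.pos_iff_ne_zero] using this
    have hf : 1 ≤ ⌊c ^ lenb b n⌋₊ := by
      apply Nat.le_floor
      have : (1 : ℝ) ≤ c ^ lenb b n := one_le_pow₀ hc
      exact_mod_cast this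
    calc 1 = 1 * 1 := by norm_num
    _ ≤ ⌊c ^ lenb b n⌋₊ * lenb b n := Nat.mul_le_mul hf hl
  calc 2 * b ^ (k - 1) - 1 = (Finset.Icc 1 (2 * b ^ (k - 1) - 1)).card • 1 := by
        simp [Nat.card_Icc]
  _ ≤ ∑ n ∈ Finset.Icc 1 (2 * b ^ (k - 1) - 1), ⌊c ^ lenb b n⌋₊ * lenb b n :=
        Finset.card_nsmul_le_sum _ _ _ h

lemma two_pow_le_aux {b : ℕ} (hb : 2 ≤ b) (k : ℕ) (hk : 1 ≤ k) :
    2 * b ^ (k - 1) ≤ b ^ k := by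
  calc 2 * b ^ (k - 1) ≤ b * b ^ (k - 1) := Nat.mul_le_mul_right _ hb
  _ = b ^ k := by rw [← pow_succ']; congr 1; omega

lemma dTotal_upper (b : ℕ) (hb : 2 ≤ b) (c : ℝ) (hc : 1 ≤ c) (k : ℕ) (hk : 1 ≤ k) :
    (dTotal b c k : ℝ) ≤ k * (c * b) ^ k := by
  have hbpow : 1 ≤ b ^ (k - 1) := Nat.one_le_pow _ _ (by omega)
  have hN : 2 * b ^ (k - 1) - 1 < b ^ k := by
    have := two_pow_le_aux hb k hk
    omega
  have hc0 : (0 : ℝ) ≤ c := by linarith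
  rw [dTotal]
  push_cast
  calc ∑ n ∈ Finset.Icc 1 (2 * b ^ (k - 1) - 1), (⌊c ^ lenb b n⌋₊ : ℝ) * (lenb b n : ℝ)
      ≤ ∑ _n ∈ Finset.Icc 1 (2 * b ^ (k - 1) - 1), c ^ k * (k : ℝ) := by
        apply Finset.sum_le_sum
        intro n hn
        simp only [Finset.mem_Icc] at hn
        have hlen : lenb b n ≤ k := lenb_le_of_lt_pow hb (lt_of_le_of_lt hn.2 hN)
        have h1 : (⌊c ^ lenb b n⌋₊ : ℝ) ≤ c ^ lenb b n := Nat.floor_le (by positivity)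
        have h2 : c ^ lenb b n ≤ c ^ k := pow_le_pow_right₀ hc hlen
        have h3 : (lenb b n : ℝ) ≤ (k : ℝ) := by exact_mod_cast hlen
        have h4 : (0 : ℝ) ≤ c ^ k := by positivity
        exact mul_le_mul (h1.trans h2) h3 (by positivity) h4
  _ = ((2 * b ^ (k - 1) - 1 : ℕ) : ℝ) * (c ^ k * (k : ℝ)) := by
        rw [Finset.sum_const, Nat.card_Icc, nsmul_eq_mul]
        norm_num
  _ ≤ ((b ^ k : ℕ) : ℝ) * (c ^ k * (k : ℝ)) := by
        have : ((2 * b ^ (k - 1) - 1 : ℕ) : ℝ) ≤ ((b ^ k : ℕ) : ℝ) := by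
          exact_mod_cast hN.le
        apply mul_le_mul_of_nonneg_right this
        positivity
  _ = (k : ℝ) * (c * b) ^ k := by
        rw [mul_pow]
        push_cast
        ring

set_option maxHeartbeats 1000000 in
/-- If `m_{1,b}(ξ_{ℕ∖A,b,c}; d_{b,c,k}) - d_{b,c,k}/b ≥ r·(cb)^k` for some `r > 0` and all
large `k`, then the limsup in the definition of simple strong normality (for the digit `1`)
is `+∞`. -/
theorem limsup_eq_top_of_excess_ones (b : ℕ) (hb : 2 ≤ b) (c : ℝ) (hc : 1 ≤ c)
    (A : Set ℕ) (hA : 0 ∉ A) (r : ℝ) (hr : 0 < r)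
    (hyp : ∀ᶠ k : ℕ in Filter.atTop,
      r * (c * b) ^ k ≤
        (digCount b (xiReal b c {n : ℕ | 0 < n ∧ n ∉ A}) 1 (dTotal b c k) : ℝ)
          - (dTotal b c k : ℝ) / b) :
    Filter.atTop.limsup
        (fun n : ℕ => (snRatio b (xiReal b c {n : ℕ | 0 < n ∧ n ∉ A}) 1 n : EReal))
      = ⊤ := by
  have hb1 : 1 < b := by omega
  have hbR : (2 : ℝ) ≤ (b : ℝ) := by exact_mod_cast hb
  set B : Set ℕ := {n : ℕ | 0 < n ∧ n ∉ A} with hBdef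
  set ξ : ℝ := xiReal b c B with hξdef
  set Q : ℝ := c * b with hQdef
  have hQ2 : (2 : ℝ) ≤ Q := by nlinarith
  have hQ0 : (0 : ℝ) < Q := by linarith
  set s : ℝ := Real.sqrt Q with hsdef
  have hs2 : s ^ 2 = Q := Real.sq_sqrt hQ0.le
  have hs0 : 0 ≤ s := Real.sqrt_nonneg Q
  have hs1 : 1 < s := by nlinarith
  set u : ℝ := Real.sqrt s with hudef
  have hu2 : u ^ 2 = s := Real.sq_sqrt (by linarith)
  have hu0 : 0 ≤ u := Real.sqrt_nonneg s
  have hu1 : 1 < u := by nlinarith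
  have hlogQ : 0 ≤ Real.log Q := Real.log_nonneg (by linarith)
  set C : ℝ := Real.sqrt (2 * (1 + Real.log Q)) with hCdef
  have hC0 : 0 < C := Real.sqrt_pos.2 (by linarith)
  have hC2 : C ^ 2 = 2 * (1 + Real.log Q) := Real.sq_sqrt (by linarith)
  have key : ∀ᶠ k : ℕ in atTop,
      (r / C) * ((u - 1) * u ^ k) ≤ snRatio b ξ 1 (dTotal b c k) := by
    filter_upwards [hyp, eventually_ge_atTop 2] with k hhyp hk2
    set d : ℕ := dTotal b c k with hddef
    have hdlow : 2 * b ^ (k - 1) - 1 ≤ d := dTotal_lower b c hc k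
    have h2k : 2 ^ k ≤ 2 * b ^ (k - 1) := by
      calc 2 ^ k = 2 * 2 ^ (k - 1) := by rw [← pow_succ']; congr 1; omega
      _ ≤ 2 * b ^ (k - 1) := by
          exact Nat.mul_le_mul_left _ (Nat.pow_le_pow_left hb _)
    have hd3 : 3 ≤ d := by
      have h4 : 4 ≤ 2 ^ k := by
        calc (4 : ℕ) = 2 ^ 2 := rfl
        _ ≤ 2 ^ k := Nat.pow_le_pow_right (by omega) hk2
      omega
    have hD3 : (3 : ℝ) ≤ (d : ℝ) := by exact_mod_cast hd3
    have hD0 : (0 : ℝ) < (d : ℝ) := by linarith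
    have hlogD : 1 < Real.log d := by
      have h3 : Real.exp 1 < 3 := lt_trans Real.exp_one_lt_d9 (by norm_num)
      have h1 : (1 : ℝ) < Real.log 3 := (Real.lt_log_iff_exp_lt (by norm_num)).2 h3
      exact lt_of_lt_of_le h1 (Real.log_le_log (by norm_num) hD3)
    have hll : 0 < Real.log (Real.log d) := Real.log_pos hlogD
    have hdu : (d : ℝ) ≤ (k : ℝ) * Q ^ k := dTotal_upper b hb c hc k (by omega)
    have hkR : (0 : ℝ) < (k : ℝ) := by
      have : (0 : ℕ) < k := by omega
      exact_mod_cast this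
    have hllle : Real.log (Real.log d) ≤ (k : ℝ) * (1 + Real.log Q) := by
      have h1 : Real.log (Real.log d) ≤ Real.log d :=
        le_trans (Real.log_le_sub_one_of_pos (by linarith)) (by linarith)
      have h2 : Real.log d ≤ Real.log ((k : ℝ) * Q ^ k) := Real.log_le_log hD0 hdu
      have h3 : Real.log ((k : ℝ) * Q ^ k) = Real.log k + (k : ℝ) * Real.log Q := by
        rw [Real.log_mul (by positivity) (by positivity), Real.log_pow]
      have h4 : Real.log k ≤ (k : ℝ) :=
        le_trans (Real.log_le_sub_one_of_pos hkR) (by linarith)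
      have h5 : Real.log d ≤ Real.log k + (k : ℝ) * Real.log Q := h2.trans_eq h3
      nlinarith
    set denom : ℝ := Real.sqrt (2 * (d : ℝ) * Real.log (Real.log d)) with hdenomdef
    have hdenpos : 0 < denom :=
      Real.sqrt_pos.2 (mul_pos (by linarith) hll)
    have hU0 : (0 : ℝ) ≤ C * (k : ℝ) * s ^ k := by positivity
    have hdenle : denom ≤ C * (k : ℝ) * s ^ k := by
      rw [show C * (k : ℝ) * s ^ k = Real.sqrt ((C * (k : ℝ) * s ^ k) ^ 2) from
        (Real.sqrt_sq hU0).symm]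
      apply Real.sqrt_le_sqrt
      have hsk2 : (s ^ k) ^ 2 = Q ^ k := by
        rw [← pow_mul, mul_comm, pow_mul, hs2]
      have hexp : (C * (k : ℝ) * s ^ k) ^ 2
          = 2 * (1 + Real.log Q) * ((k : ℝ) ^ 2 * Q ^ k) := by
        rw [mul_pow, mul_pow, hsk2, hC2]; ring
      rw [hexp]
      have hm : (d : ℝ) * Real.log (Real.log d)
          ≤ ((k : ℝ) * Q ^ k) * ((k : ℝ) * (1 + Real.log Q)) :=
        mul_le_mul hdu hllle hll.le (by positivity)
      calc 2 * (d : ℝ) * Real.log (Real.log d)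
          = 2 * ((d : ℝ) * Real.log (Real.log d)) := by ring
      _ ≤ 2 * (((k : ℝ) * Q ^ k) * ((k : ℝ) * (1 + Real.log Q))) := by linarith
      _ = 2 * (1 + Real.log Q) * ((k : ℝ) ^ 2 * Q ^ k) := by ring
    have hexc : r * Q ^ k ≤ (digCount b ξ 1 d : ℝ) - (d : ℝ) / b := hhyp
    have hrQ : 0 < r * Q ^ k := by positivity
    have step1 : r * Q ^ k / (C * (k : ℝ) * s ^ k) ≤ snRatio b ξ 1 d := by
      have hsn : snRatio b ξ 1 d
          = ((digCount b ξ 1 d : ℝ) - (d : ℝ) / b) / denom := rfl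
      rw [hsn]
      exact div_le_div₀ (by linarith) hexc hdenpos hdenle
    refine le_trans ?_ step1
    have hsk : (0 : ℝ) < s ^ k := by positivity
    have hQsk : Q ^ k = s ^ k * s ^ k := by
      rw [← hs2, ← pow_add, ← pow_mul, two_mul]
    have heq : r * Q ^ k / (C * (k : ℝ) * s ^ k) = (r / C) * (s ^ k / (k : ℝ)) := by
      rw [hQsk]; field_simp
    rw [heq]
    have hberq : (u - 1) * u ^ k ≤ s ^ k / (k : ℝ) := by
      rw [le_div_iff₀ hkR]
      have hber : (k : ℝ) * (u - 1) ≤ u ^ k := by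
        have h := one_add_mul_le_pow (a := u - 1) (by linarith) k
        have : (1 : ℝ) + (k : ℝ) * (u - 1) ≤ u ^ k := by
          simpa using h
        linarith
      have hsk' : s ^ k = u ^ k * u ^ k := by
        rw [← hu2, ← pow_add, ← pow_mul, two_mul]
      calc (u - 1) * u ^ k * (k : ℝ) = ((k : ℝ) * (u - 1)) * u ^ k := by ring
      _ ≤ u ^ k * u ^ k := mul_le_mul_of_nonneg_right hber (by positivity)
      _ = s ^ k := hsk'.symm
    exact mul_le_mul_of_nonneg_left hberq (by positivity)
  have Td : Filter.Tendsto (fun k => dTotal b c k) atTop atTop := by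
    apply tendsto_atTop_mono (f := fun k : ℕ => k) ?_ tendsto_id
    intro k
    show k ≤ dTotal b c k
    have h1 : k < 2 ^ k := Nat.lt_two_pow_self
    have h2 : 2 ^ k ≤ 2 * b ^ (k - 1) := by
      rcases Nat.eq_zero_or_pos k with rfl | hk
      · simp
      · calc 2 ^ k = 2 * 2 ^ (k - 1) := by rw [← pow_succ']; congr 1; omega
        _ ≤ 2 * b ^ (k - 1) := Nat.mul_le_mul_left _ (Nat.pow_le_pow_left hb _)
    have h3 := dTotal_lower b c hc k
    omega
  have Tg : Filter.Tendsto (fun k : ℕ => (r / C) * ((u - 1) * u ^ k)) atTop atTop := by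
    apply Filter.Tendsto.const_mul_atTop (by positivity)
    apply Filter.Tendsto.const_mul_atTop (by linarith)
    exact tendsto_pow_atTop_atTop_of_one_lt hu1
  have Tf : Filter.Tendsto (fun k => snRatio b ξ 1 (dTotal b c k)) atTop atTop :=
    tendsto_atTop_mono' _ key Tg
  rw [EReal.eq_top_iff_forall_lt]
  intro M
  have hfreq : ∃ᶠ n in atTop, (M + 1 : ℝ) ≤ snRatio b ξ 1 n := by
    have hev : ∀ᶠ k in atTop, (M + 1 : ℝ) ≤ snRatio b ξ 1 (dTotal b c k) :=
      Tf.eventually_ge_atTop (M + 1)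
    exact Td.frequently hev.frequently
  have hle : ((M + 1 : ℝ) : EReal) ≤ atTop.limsup (fun n : ℕ => (snRatio b ξ 1 n : EReal)) := by
    apply le_limsup_of_frequently_le'
    exact hfreq.mono (fun n hn => by exact_mod_cast hn)
  refine lt_of_lt_of_le ?_ hle
  exact_mod_cast (by linarith : (M : ℝ) < M + 1)
end

section
/- For every integer b ≥ 2, the base-b Champernowne number ξ_{ℕ,b} ∈ (0,1), whose base-b expansion is obtained by concatenating the base-b digit strings of 1, 2, 3, ... in increasing order, is not simply strongly normal to the base b. -/
open Filter

namespace BB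


/-- concatenation of digit strings of 1..N -/
def champ (b N : ℕ) : List ℕ :=
  ((List.range N).map fun n => (Nat.digits b (n + 1)).reverse).flatten

lemma nth_pos (n : ℕ) : Nat.nth (· ∈ {n : ℕ | 0 < n}) n = n + 1 := by
  have h : Nat.count (· ∈ {n : ℕ | 0 < n}) (n + 1) = n := by
    induction n with
    | zero => simp [Nat.count_succ, Nat.count_zero]
    | succ k ih => rw [Nat.count_succ, ih]; simp
  have := Nat.nth_count (p := (· ∈ {n : ℕ | 0 < n})) (n := n + 1) (by simp)
  rwa [h] at this

lemma block_one (b a : ℕ) : block b 1 a = (Nat.digits b a).reverse := by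
  simp [block]

lemma prefixDigits_eq (b N : ℕ) :
    prefixDigits b 1 {n : ℕ | 0 < n} N = champ b N := by
  unfold prefixDigits champ
  congr 1
  apply List.map_congr_left
  intro n _
  rw [nth_pos, block_one]

lemma champ_succ (b N : ℕ) :
    champ b (N + 1) = champ b N ++ (Nat.digits b (N + 1)).reverse := by
  unfold champ
  rw [List.range_succ, List.map_append, List.flatten_append]
  simp

lemma champ_prefix (b : ℕ) {N M : ℕ} (h : N ≤ M) : champ b N <+: champ b M := by
  induction M with
  | zero => simp_all
  | succ m ih =>
    rcases Nat.eq_or_lt_of_le h with rfl | h'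
    · exact List.prefix_refl _
    · exact (ih (Nat.lt_succ_iff.mp h')).trans ⟨_, (champ_succ b m).symm⟩

lemma length_champ (b N : ℕ) :
    (champ b N).length = ∑ n ∈ Finset.range N, lenb b (n + 1) := by
  unfold champ
  rw [List.length_flatten]
  induction N with
  | zero => simp
  | succ m ih =>
    rw [List.range_succ, Finset.sum_range_succ, ← ih]
    simp [lenb]

lemma le_length_champ {b : ℕ} (hb : 2 ≤ b) (N : ℕ) : N ≤ (champ b N).length := by
  rw [length_champ]
  calc N = ∑ n ∈ Finset.range N, 1 := by simp
  _ ≤ _ := by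
    apply Finset.sum_le_sum
    intro n _
    have : Nat.digits b (n + 1) ≠ [] := Nat.digits_ne_nil_iff_ne_zero.mpr (Nat.succ_ne_zero n)
    have := List.length_pos_iff.mpr this
    simpa [lenb] using Nat.succ_le_of_lt this

lemma xiDigit_eq {b : ℕ} (hb : 2 ≤ b) {i N : ℕ} (h : i < (champ b N).length) :
    xiDigit b 1 {n : ℕ | 0 < n} i = (champ b N).getD i 0 := by
  unfold xiDigit
  rw [prefixDigits_eq]
  have h1 : i < (champ b (i + 1)).length := lt_of_lt_of_le (Nat.lt_succ_self i) (le_length_champ hb _)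
  rcases le_total (i + 1) N with hle | hle
  · obtain ⟨t, ht⟩ := champ_prefix b hle
    rw [← ht, List.getD_append _ _ _ _ h1]
  · obtain ⟨t, ht⟩ := champ_prefix b hle
    rw [← ht, List.getD_append _ _ _ _ h]

lemma xiDigit_lt {b : ℕ} (hb : 2 ≤ b) (i : ℕ) : xiDigit b 1 {n : ℕ | 0 < n} i < b := by
  have h : i < (champ b (i + 1)).length := lt_of_lt_of_le (Nat.lt_succ_self i) (le_length_champ hb _)
  rw [xiDigit_eq hb h]
  have hmem : (champ b (i + 1)).getD i 0 ∈ champ b (i + 1) ∨ (champ b (i+1)).getD i 0 = 0 := by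
    left
    rw [List.getD_eq_getElem _ _ h]
    exact List.getElem_mem h
  rcases hmem with hm | h0
  · unfold champ at hm
    rw [List.mem_flatten] at hm
    obtain ⟨l, hl, hml⟩ := hm
    rw [List.mem_map] at hl
    obtain ⟨n, _, rfl⟩ := hl
    rw [List.mem_reverse] at hml
    exact Nat.digits_lt_base hb hml
  · omega


section real
variable {b : ℕ}

lemma geo_aux (hb : 2 ≤ b) : ∑' j : ℕ, (1 : ℝ) / (b : ℝ) ^ (j + 1) = 1 / ((b : ℝ) - 1) := by
  have hb0 : (0:ℝ) < b := by positivity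
  have hlt : (1 : ℝ) / b < 1 := by
    rw [div_lt_one hb0]; exact_mod_cast (by omega : 1 < b)
  have hge : (0:ℝ) ≤ 1 / b := by positivity
  have hgeo := tsum_geometric_of_lt_one hge hlt
  have : (fun j : ℕ => (1 : ℝ) / (b : ℝ) ^ (j + 1)) =
      fun j : ℕ => (1 / (b:ℝ)) * (1 / (b:ℝ)) ^ j := by
    funext j
    rw [← pow_succ']
    rw [div_pow, one_pow]
  rw [this, tsum_mul_left, hgeo]
  have hbne : (b:ℝ) - 1 ≠ 0 := by
    have : (1:ℝ) < b := by exact_mod_cast (by omega : 1 < b)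
    linarith
  field_simp

lemma summable_dig (hb : 2 ≤ b) (d : ℕ → ℕ) (hd : ∀ i, d i < b) :
    Summable (fun i => (d i : ℝ) / (b : ℝ) ^ (i + 1)) := by
  have hb0 : (0:ℝ) < b := by positivity
  have hgs : Summable (fun i : ℕ => ((b:ℝ) - 1) * (1 / (b : ℝ) ^ (i + 1))) := by
    apply Summable.mul_left
    have : (fun j : ℕ => (1 : ℝ) / (b : ℝ) ^ (j + 1)) =
        fun j : ℕ => (1 / (b:ℝ)) * (1 / (b:ℝ)) ^ j := by
      funext j; rw [← pow_succ', div_pow, one_pow]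
    rw [this]
    apply Summable.mul_left
    apply summable_geometric_of_lt_one (by positivity)
    rw [div_lt_one hb0]; exact_mod_cast (by omega : 1 < b)
  apply Summable.of_nonneg_of_le (fun i => by positivity) _ hgs
  intro i
  rw [mul_one_div]
  apply div_le_div_of_nonneg_right _ (by positivity)
  have := hd i
  have h1 : (d i : ℝ) ≤ (b : ℝ) - 1 := by
    have : (d i : ℝ) + 1 ≤ b := by exact_mod_cast hd i
    linarith
  exact h1

lemma tsum_digits_le_sub (hb : 2 ≤ b) (e : ℕ → ℕ) (he : ∀ j, e j < b) (j₀ : ℕ)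
    (hj : e j₀ + 2 ≤ b) :
    ∑' j : ℕ, (e j : ℝ) / (b : ℝ) ^ (j + 1) ≤ 1 - 1 / (b : ℝ) ^ (j₀ + 1) := by
  have hb0 : (0:ℝ) < b := by positivity
  set g : ℕ → ℝ := fun j => ((b:ℝ) - 1) / (b : ℝ) ^ (j + 1) -
    (if j = j₀ then 1 / (b : ℝ) ^ (j₀ + 1) else 0) with hg
  have hgeo1 : Summable (fun j : ℕ => (1:ℝ) / (b : ℝ) ^ (j + 1)) := by
    have : (fun j : ℕ => (1 : ℝ) / (b : ℝ) ^ (j + 1)) =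
        fun j : ℕ => (1 / (b:ℝ)) * (1 / (b:ℝ)) ^ j := by
      funext j; rw [← pow_succ', div_pow, one_pow]
    rw [this]
    apply Summable.mul_left
    apply summable_geometric_of_lt_one (by positivity)
    rw [div_lt_one hb0]; exact_mod_cast (by omega : 1 < b)
  have hg1 : Summable (fun j : ℕ => ((b:ℝ) - 1) / (b : ℝ) ^ (j + 1)) :=
    (hgeo1.mul_left ((b:ℝ) - 1)).congr (fun j => by rw [mul_one_div])
  have hg2 : Summable (fun j : ℕ => (if j = j₀ then 1 / (b : ℝ) ^ (j₀ + 1) else 0)) :=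
    (hasSum_ite_eq j₀ _).summable
  have hgsum : Summable g := hg1.sub hg2
  have hle : ∀ j, (e j : ℝ) / (b : ℝ) ^ (j + 1) ≤ g j := by
    intro j
    simp only [hg]
    by_cases h : j = j₀
    · subst h
      rw [if_pos rfl]
      have heq : ((b:ℝ) - 1) / (b : ℝ) ^ (j + 1) - 1 / (b : ℝ) ^ (j + 1) =
          ((b:ℝ) - 2) / (b : ℝ) ^ (j + 1) := by ring
      rw [heq]
      apply div_le_div_of_nonneg_right _ (by positivity)
      have : (e j : ℝ) + 2 ≤ b := by exact_mod_cast hj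
      linarith
    · simp only [if_neg h, sub_zero]
      apply div_le_div_of_nonneg_right _ (by positivity)
      have : (e j : ℝ) + 1 ≤ b := by exact_mod_cast he j
      linarith
  calc ∑' j, (e j : ℝ) / (b : ℝ) ^ (j + 1) ≤ ∑' j, g j :=
        Summable.tsum_le_tsum hle (summable_dig hb e he) hgsum
  _ = 1 - 1 / (b : ℝ) ^ (j₀ + 1) := by
      rw [hg, Summable.tsum_sub hg1 hg2, tsum_ite_eq]
      congr 1
      have : (fun j : ℕ => ((b:ℝ) - 1) / (b : ℝ) ^ (j + 1)) =
          fun j : ℕ => ((b:ℝ) - 1) * (1 / (b : ℝ) ^ (j + 1)) := by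
        funext j; rw [mul_one_div]
      rw [this, tsum_mul_left, geo_aux hb]
      have hbne : (b:ℝ) - 1 ≠ 0 := by
        have : (1:ℝ) < b := by exact_mod_cast (by omega : 1 < b)
        linarith
      field_simp

/-- partial "integer part" -/
def Snat (b : ℕ) (d : ℕ → ℕ) (n : ℕ) : ℕ := ∑ j ∈ Finset.range n, d j * b ^ (n - 1 - j)

lemma Snat_succ (b : ℕ) (d : ℕ → ℕ) (i : ℕ) :
    Snat b d (i + 1) = b * Snat b d i + d i := by
  unfold Snat
  rw [Finset.sum_range_succ]
  simp only [Nat.add_sub_cancel, Nat.sub_self, pow_zero, mul_one]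
  rw [Finset.mul_sum]
  congr 1
  apply Finset.sum_congr rfl
  intro j hj
  rw [Finset.mem_range] at hj
  have h2 : i - j = (i - 1 - j) + 1 := by omega
  rw [h2, pow_succ]
  ring

lemma floor_mul_pow (hb : 2 ≤ b) (d : ℕ → ℕ) (hd : ∀ i, d i < b)
    (hsm : ∀ n, ∃ j, d (n + j) + 2 ≤ b) (n : ℕ) :
    ⌊(∑' i, (d i : ℝ) / (b : ℝ) ^ (i + 1)) * (b : ℝ) ^ n⌋ = (Snat b d n : ℤ) := by
  have hb0 : (0:ℝ) < b := by positivity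
  have hbne : (b:ℝ) ≠ 0 := ne_of_gt hb0
  have hsum := summable_dig hb d hd
  have hsplit := (Summable.sum_add_tsum_nat_add (f := fun i => (d i : ℝ) / (b : ℝ) ^ (i + 1)) n hsum).symm
  set T : ℝ := ∑' i, (d (n + i) : ℝ) / (b : ℝ) ^ (i + 1) with hT
  have key : (∑' i, (d i : ℝ) / (b : ℝ) ^ (i + 1)) * (b : ℝ) ^ n = (Snat b d n : ℝ) + T := by
    rw [hsplit, add_mul]
    congr 1
    · unfold Snat
      push_cast
      rw [Finset.sum_mul]
      apply Finset.sum_congr rfl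
      intro i hi
      rw [Finset.mem_range] at hi
      have hpow : (b : ℝ) ^ n = (b : ℝ) ^ (i + 1) * (b : ℝ) ^ (n - 1 - i) := by
        rw [← pow_add]
        congr 1
        omega
      rw [hpow]
      field_simp
    · rw [← tsum_mul_right]
      apply tsum_congr
      intro i
      rw [show i + n = n + i from add_comm i n]
      have hpow : (b : ℝ) ^ (n + i + 1) = (b : ℝ) ^ (i + 1) * (b : ℝ) ^ n := by
        rw [← pow_add]; congr 1; omega
      rw [hpow]
      field_simp
  have hT0 : 0 ≤ T := tsum_nonneg (fun i => by positivity)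
  have hT1 : T < 1 := by
    obtain ⟨j₀, hj₀⟩ := hsm n
    have := tsum_digits_le_sub hb (fun i => d (n + i)) (fun i => hd _) j₀ hj₀
    have hpos : (0:ℝ) < 1 / (b : ℝ) ^ (j₀ + 1) := by positivity
    rw [← hT] at this
    linarith
  rw [key, Int.floor_eq_iff]
  constructor
  · push_cast; linarith
  · push_cast; linarith

lemma digitOf_tsum (hb : 2 ≤ b) (d : ℕ → ℕ) (hd : ∀ i, d i < b)
    (hsm : ∀ n, ∃ j, d (n + j) + 2 ≤ b) (i : ℕ) :
    digitOf b (∑' i, (d i : ℝ) / (b : ℝ) ^ (i + 1)) i = d i := by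
  unfold digitOf
  rw [floor_mul_pow hb d hd hsm (i + 1), Int.toNat_natCast, Snat_succ,
    Nat.mul_add_mod, Nat.mod_eq_of_lt (hd i)]

end real


lemma sum_block {M : Type*} [AddCommMonoid M] (b : ℕ) (f : ℕ → M) (t : ℕ) :
    ∑ m ∈ Finset.Ico (b * t) (b * (t + 1)), f m = ∑ r ∈ Finset.range b, f (b * t + r) := by
  rw [Finset.sum_Ico_eq_sum_range]
  have h : b * (t + 1) - b * t = b := by rw [Nat.mul_succ]; omega
  rw [h]

lemma sum_base_mul {M : Type*} [AddCommMonoid M] (b : ℕ) (f : ℕ → M) (s t : ℕ) :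
    ∑ m ∈ Finset.Ico (b * s) (b * t), f m
      = ∑ q ∈ Finset.Ico s t, ∑ r ∈ Finset.range b, f (b * q + r) := by
  induction t with
  | zero =>
    rw [Finset.Ico_eq_empty (by omega : ¬ b * s < b * 0),
      Finset.Ico_eq_empty (by omega : ¬ s < 0)]
    simp
  | succ t ih =>
    rcases le_or_gt (t + 1) s with h | h
    · have hle : b * (t + 1) ≤ b * s := Nat.mul_le_mul_left b h
      rw [Finset.Ico_eq_empty (by omega : ¬ b * s < b * (t + 1)),
        Finset.Ico_eq_empty (by omega : ¬ s < t + 1)]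
      simp
    · have hst : s ≤ t := by omega
      have h1 : b * s ≤ b * t := Nat.mul_le_mul_left b hst
      have h2 : b * t ≤ b * (t + 1) := Nat.mul_le_mul_left b (by omega)
      rw [← Finset.sum_Ico_consecutive f h1 h2, ih,
        ← Finset.sum_Ico_consecutive _ hst (by omega : t ≤ t + 1), sum_block]
      congr 1
      rw [Finset.sum_Ico_eq_sum_range]
      simp

variable {b : ℕ}

lemma digits_mul_add (hb : 2 ≤ b) {q r : ℕ} (hq : 0 < q) (hr : r < b) :
    Nat.digits b (b * q + r) = r :: Nat.digits b q := by
  have h0 : 0 < b * q + r := by positivity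
  rw [Nat.digits_def' (by omega : 1 < b) h0]
  congr 1
  · rw [Nat.mul_add_mod, Nat.mod_eq_of_lt hr]
  · congr 1
    rw [Nat.mul_add_div (by omega), Nat.div_eq_of_lt hr]
    omega

lemma digits_small (hb : 2 ≤ b) {m : ℕ} (h1 : 0 < m) (h2 : m < b) :
    Nat.digits b m = [m] := by
  rw [Nat.digits_def' (by omega : 1 < b) h1, Nat.mod_eq_of_lt h2, Nat.div_eq_of_lt h2,
    Nat.digits_zero]

lemma lenb_small (hb : 2 ≤ b) {m : ℕ} (h1 : 0 < m) (h2 : m < b) : lenb b m = 1 := by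
  unfold lenb; rw [digits_small hb h1 h2]; rfl

lemma count0_small (hb : 2 ≤ b) {m : ℕ} (h1 : 0 < m) (h2 : m < b) :
    (Nat.digits b m).count 0 = 0 := by
  rw [digits_small hb h1 h2, List.count_cons, List.count_nil]
  simp
  omega

lemma lenb_mul_add (hb : 2 ≤ b) {q r : ℕ} (hq : 0 < q) (hr : r < b) :
    lenb b (b * q + r) = lenb b q + 1 := by
  unfold lenb; rw [digits_mul_add hb hq hr]; rfl

lemma count0_mul_add (hb : 2 ≤ b) {q r : ℕ} (hq : 0 < q) (hr : r < b) :
    (Nat.digits b (b * q + r)).count 0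
      = (Nat.digits b q).count 0 + (if r = 0 then 1 else 0) := by
  rw [digits_mul_add hb hq hr, List.count_cons]
  congr 1
  by_cases h : r = 0 <;> simp [h]

/-- total number of digits of 1 .. b^K - 1 -/
def Gf (b K : ℕ) : ℕ := ∑ m ∈ Finset.Ico 1 (b ^ K), lenb b m

/-- total number of zero digits of 1 .. b^K - 1 -/
def Zf (b K : ℕ) : ℕ := ∑ m ∈ Finset.Ico 1 (b ^ K), (Nat.digits b m).count 0

lemma b_le_pow (hb : 2 ≤ b) (K : ℕ) : b ≤ b ^ (K + 1) := by
  calc b = b ^ 1 := (pow_one b).symm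
  _ ≤ b ^ (K + 1) := Nat.pow_le_pow_right (by omega) (by omega)

lemma Gf_succ (hb : 2 ≤ b) (K : ℕ) :
    Gf b (K + 1) = b * Gf b K + b ^ (K + 1) - 1 := by
  have hbpos : 0 < b := by omega
  have h1b : 1 ≤ b ^ K := Nat.one_le_pow _ _ hbpos
  have hbK : b ≤ b ^ (K + 1) := b_le_pow hb K
  have hsplit : Gf b (K + 1) = (∑ m ∈ Finset.Ico 1 b, lenb b m)
      + ∑ m ∈ Finset.Ico b (b ^ (K + 1)), lenb b m := by
    unfold Gf
    rw [Finset.sum_Ico_consecutive _ (by omega) hbK]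
  have hfirst : (∑ m ∈ Finset.Ico 1 b, lenb b m) = b - 1 := by
    have h1 : ∀ m ∈ Finset.Ico 1 b, lenb b m = 1 := by
      intro m hm
      rw [Finset.mem_Ico] at hm
      exact lenb_small hb (by omega) hm.2
    rw [Finset.sum_congr rfl h1, Finset.sum_const, Nat.card_Ico, smul_eq_mul, mul_one]
  have hIco : Finset.Ico b (b ^ (K + 1)) = Finset.Ico (b * 1) (b * b ^ K) := by
    congr 1
    · omega
    · rw [pow_succ]; ring
  have hsecond : ∑ m ∈ Finset.Ico b (b ^ (K + 1)), lenb b m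
      = b * Gf b K + b ^ (K + 1) - b := by
    rw [hIco, sum_base_mul]
    have hinner : ∀ q ∈ Finset.Ico 1 (b ^ K), (∑ r ∈ Finset.range b, lenb b (b * q + r))
        = b * lenb b q + b := by
      intro q hq
      rw [Finset.mem_Ico] at hq
      have h2 : ∀ r ∈ Finset.range b, lenb b (b * q + r) = lenb b q + 1 := by
        intro r hr
        rw [Finset.mem_range] at hr
        exact lenb_mul_add hb (by omega) hr
      rw [Finset.sum_congr rfl h2, Finset.sum_const, Finset.card_range, smul_eq_mul]
      ring
    rw [Finset.sum_congr rfl hinner, Finset.sum_add_distrib, ← Finset.mul_sum,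
      Finset.sum_const, Nat.card_Ico, smul_eq_mul]
    show b * Gf b K + (b ^ K - 1) * b = b * Gf b K + b ^ (K + 1) - b
    have : (b ^ K - 1) * b = b ^ (K + 1) - b := by
      rw [Nat.sub_mul, one_mul, pow_succ]
    omega
  rw [hsplit, hfirst, hsecond]
  omega

lemma Zf_succ (hb : 2 ≤ b) (K : ℕ) :
    Zf b (K + 1) = b * Zf b K + b ^ K - 1 := by
  have hbpos : 0 < b := by omega
  have h1b : 1 ≤ b ^ K := Nat.one_le_pow _ _ hbpos
  have hbK : b ≤ b ^ (K + 1) := b_le_pow hb K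
  have hsplit : Zf b (K + 1) = (∑ m ∈ Finset.Ico 1 b, (Nat.digits b m).count 0)
      + ∑ m ∈ Finset.Ico b (b ^ (K + 1)), (Nat.digits b m).count 0 := by
    unfold Zf
    rw [Finset.sum_Ico_consecutive _ (by omega) hbK]
  have hfirst : (∑ m ∈ Finset.Ico 1 b, (Nat.digits b m).count 0) = 0 := by
    apply Finset.sum_eq_zero
    intro m hm
    rw [Finset.mem_Ico] at hm
    exact count0_small hb (by omega) hm.2
  have hIco : Finset.Ico b (b ^ (K + 1)) = Finset.Ico (b * 1) (b * b ^ K) := by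
    congr 1
    · omega
    · rw [pow_succ]; ring
  have hsecond : ∑ m ∈ Finset.Ico b (b ^ (K + 1)), (Nat.digits b m).count 0
      = b * Zf b K + (b ^ K - 1) := by
    rw [hIco, sum_base_mul]
    have hinner : ∀ q ∈ Finset.Ico 1 (b ^ K), (∑ r ∈ Finset.range b,
        (Nat.digits b (b * q + r)).count 0) = b * (Nat.digits b q).count 0 + 1 := by
      intro q hq
      rw [Finset.mem_Ico] at hq
      have h2 : ∀ r ∈ Finset.range b, (Nat.digits b (b * q + r)).count 0
          = (Nat.digits b q).count 0 + (if r = 0 then 1 else 0) := by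
        intro r hr
        rw [Finset.mem_range] at hr
        exact count0_mul_add hb (by omega) hr
      rw [Finset.sum_congr rfl h2, Finset.sum_add_distrib, Finset.sum_const,
        Finset.card_range, smul_eq_mul]
      have hone : (∑ r ∈ Finset.range b, if r = 0 then 1 else 0) = 1 := by
        rw [Finset.sum_ite_eq' (Finset.range b) 0 (fun _ => 1)]
        simp [hbpos]
      rw [hone]
    rw [Finset.sum_congr rfl hinner, Finset.sum_add_distrib, ← Finset.mul_sum,
      Finset.sum_const, Nat.card_Ico, smul_eq_mul, mul_one]
    rfl
  rw [hsplit, hfirst, hsecond]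
  omega

lemma Gf_eq (hb : 2 ≤ b) (K : ℕ) : Gf b K = b * Zf b K + b ^ K - 1 := by
  induction K with
  | zero => simp [Gf, Zf]
  | succ K ih =>
    have h1b : 1 ≤ b ^ K := Nat.one_le_pow _ _ (by omega)
    rw [Gf_succ hb, Zf_succ hb, ih]

lemma Gf_le (hb : 2 ≤ b) (K : ℕ) : Gf b K ≤ K * b ^ K := by
  induction K with
  | zero => simp [Gf]
  | succ K ih =>
    rw [Gf_succ hb]
    have h1 : b * Gf b K ≤ b * (K * b ^ K) := Nat.mul_le_mul_left b ih
    have : b * (K * b ^ K) + b ^ (K + 1) ≤ (K + 1) * b ^ (K + 1) := by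
      rw [pow_succ]
      nlinarith
    omega

lemma Gf_ge (hb : 2 ≤ b) (K : ℕ) : b ^ K - 1 ≤ Gf b K := by
  rw [Gf_eq hb]
  omega


section champ4
variable {b : ℕ}

lemma exists_zero_digit (hb : 2 ≤ b) (n : ℕ) :
    ∃ j, xiDigit b 1 {n : ℕ | 0 < n} (n + j) + 2 ≤ b := by
  set s := n + 1 with hs
  have hpow : 1 ≤ b ^ s := Nat.one_le_pow _ _ (by omega)
  set N := b ^ s - 1 with hN
  have hN1 : N + 1 = b ^ s := by omega
  set L := (champ b N).length with hL
  have hLN : N ≤ L := le_length_champ hb N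
  have hsN : s ≤ N := by
    have h2 : s < 2 ^ s := Nat.lt_two_pow_self
    have h3 : 2 ^ s ≤ b ^ s := Nat.pow_le_pow_left hb s
    omega
  have hLn : n < L + 1 := by omega
  have hdig : Nat.digits b (N + 1) = List.replicate s 0 ++ [1] := by
    rw [hN1]
    have h1 := Nat.digits_base_pow_mul (b := b) (k := s) (m := 1) (by omega) one_pos
    rw [mul_one] at h1
    rw [h1, digits_small hb one_pos (by omega)]
  have hrev : (Nat.digits b (N + 1)).reverse = 1 :: List.replicate s 0 := by
    rw [hdig]
    simp
  have hlen : (champ b (N + 1)).length = L + (s + 1) := by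
    rw [champ_succ, List.length_append, hrev]
    simp [hL]
  have hval : xiDigit b 1 {n : ℕ | 0 < n} (L + 1) = 0 := by
    rw [xiDigit_eq hb (N := N + 1) (by rw [hlen]; omega), champ_succ,
      List.getD_append_right _ _ _ _ (by omega : (champ b N).length ≤ L + 1)]
    have h1 : L + 1 - (champ b N).length = 1 := by omega
    rw [h1, hrev]
    show (List.replicate s 0).getD 0 0 = 0
    rw [hs, List.replicate_succ]
    rfl
  refine ⟨L + 1 - n, ?_⟩
  have h2 : n + (L + 1 - n) = L + 1 := by omega
  rw [h2, hval]
  omega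

lemma digitOf_xi (hb : 2 ≤ b) (i : ℕ) :
    digitOf b (xiReal b 1 {n : ℕ | 0 < n}) i = xiDigit b 1 {n : ℕ | 0 < n} i := by
  unfold xiReal
  exact digitOf_tsum hb _ (xiDigit_lt hb) (exists_zero_digit hb) i

lemma count_eq (l : List ℕ) (k : ℕ) :
    ((Finset.range l.length).filter fun i => l.getD i 0 = k).card = l.count k := by
  induction l with
  | nil => simp
  | cons a t ih =>
    rw [Finset.card_filter] at *
    rw [List.length_cons, Finset.sum_range_succ']
    simp only [List.getD_cons_succ, List.getD_cons_zero]
    rw [ih, List.count_cons]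
    simp

lemma digCount_champ (hb : 2 ≤ b) (k N : ℕ) :
    digCount b (xiReal b 1 {n : ℕ | 0 < n}) k ((champ b N).length) = (champ b N).count k := by
  unfold digCount
  rw [← count_eq]
  congr 1
  apply Finset.filter_congr
  intro i hi
  rw [Finset.mem_range] at hi
  rw [digitOf_xi hb, xiDigit_eq hb hi]

lemma count_champ (k N : ℕ) :
    (champ b N).count k = ∑ n ∈ Finset.range N, (Nat.digits b (n + 1)).count k := by
  induction N with
  | zero => simp [champ]
  | succ N ih =>
    rw [champ_succ, List.count_append, List.count_reverse, ih, Finset.sum_range_succ]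

lemma length_champ_pow (hb : 2 ≤ b) (K : ℕ) :
    (champ b (b ^ K - 1)).length = Gf b K := by
  rw [length_champ]
  unfold Gf
  rw [Finset.sum_Ico_eq_sum_range]
  apply Finset.sum_congr rfl
  intro i _
  rw [add_comm]

lemma count0_champ (hb : 2 ≤ b) (K : ℕ) :
    (champ b (b ^ K - 1)).count 0 = Zf b K := by
  rw [count_champ]
  unfold Zf
  rw [Finset.sum_Ico_eq_sum_range]
  apply Finset.sum_congr rfl
  intro i _
  rw [add_comm]

lemma tendsto_ratio (r a : ℝ) (hr : 1 < r) (ha : 0 < a) :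
    Filter.Tendsto (fun K : ℕ => r ^ K / (a * K)) atTop atTop := by
  have h0 : Filter.Tendsto (fun x : ℝ => Real.exp x / x) atTop atTop := by
    have := Real.tendsto_exp_div_pow_atTop 1
    simpa using this
  have hlog : 0 < Real.log r := Real.log_pos hr
  have h1 : Filter.Tendsto (fun K : ℕ => (K : ℝ) * Real.log r) atTop atTop :=
    tendsto_natCast_atTop_atTop.atTop_mul_const hlog
  have h2 := h0.comp h1
  have h3 := h2.atTop_mul_const (div_pos hlog ha)
  apply h3.congr'
  filter_upwards [eventually_ge_atTop 1] with K hK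
  show Real.exp ((K : ℝ) * Real.log r) / ((K : ℝ) * Real.log r) * (Real.log r / a)
      = r ^ K / (a * K)
  have hexp : Real.exp ((K : ℝ) * Real.log r) = r ^ K := by
    rw [Real.exp_nat_mul, Real.exp_log (by linarith)]
  rw [hexp]
  have hK0 : (K : ℝ) ≠ 0 := by
    have : (1 : ℝ) ≤ K := by exact_mod_cast hK
    linarith
  field_simp

lemma sqrt_pow_eq (hb : 2 ≤ b) (K : ℕ) :
    Real.sqrt ((b : ℝ) ^ K) = (Real.sqrt (b : ℝ)) ^ K := by
  have hb0 : (0 : ℝ) ≤ b := by positivity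
  have h1 : (b : ℝ) ^ K = ((Real.sqrt (b : ℝ)) ^ K) ^ 2 := by
    rw [← pow_mul, mul_comm, pow_mul, Real.sq_sqrt hb0]
  rw [h1, Real.sqrt_sq (pow_nonneg (Real.sqrt_nonneg _) K)]

lemma snRatio_champ (hb : 2 ≤ b) :
    Filter.Tendsto (fun K : ℕ => snRatio b (xiReal b 1 {n : ℕ | 0 < n}) 0 (Gf b K))
      atTop atBot := by
  have hb0 : (0 : ℝ) < b := by positivity
  have hbR : (2 : ℝ) ≤ b := by exact_mod_cast hb
  have hlogb : 0 ≤ Real.log b := Real.log_nonneg (by linarith)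
  set c : ℝ := Real.sqrt (2 * (1 + Real.log b)) with hc
  have hc0 : 0 < c := Real.sqrt_pos.mpr (by linarith)
  set ξ := xiReal b 1 {n : ℕ | 0 < n} with hξ
  have hcastG : ∀ K : ℕ, ((Gf b K : ℝ)) = b * Zf b K + (b : ℝ) ^ K - 1 := by
    intro K
    have h1 := Gf_eq hb K
    have h2 : 1 ≤ b * Zf b K + b ^ K := by
      have := Nat.one_le_pow K b (by omega)
      omega
    rw [h1]
    push_cast [Nat.cast_sub h2]
    ring
  have hval : ∀ K : ℕ, snRatio b ξ 0 (Gf b K)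
      = -(((b : ℝ) ^ K - 1) /
          ((b : ℝ) * Real.sqrt (2 * (Gf b K : ℝ) * Real.log (Real.log (Gf b K : ℝ))))) := by
    intro K
    unfold snRatio
    rw [← length_champ_pow hb K, digCount_champ hb, count0_champ hb K, length_champ_pow hb K]
    have hnum : ((Zf b K : ℝ)) - (Gf b K : ℝ) / b = -(((b : ℝ) ^ K - 1) / b) := by
      rw [hcastG K]
      field_simp
      ring
    rw [hnum, neg_div, div_div]
  have hmain : Filter.Tendsto (fun K : ℕ => ((b : ℝ) ^ K - 1) /
      ((b : ℝ) * Real.sqrt (2 * (Gf b K : ℝ) * Real.log (Real.log (Gf b K : ℝ)))))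
      atTop atTop := by
    apply tendsto_atTop_mono' atTop (f₁ := fun K : ℕ =>
      (Real.sqrt (b : ℝ)) ^ K / ((2 * b * c) * K))
    · filter_upwards [eventually_ge_atTop 2] with K hK2
      have hKR : (2 : ℝ) ≤ (K : ℝ) := by exact_mod_cast hK2
      set n : ℝ := (Gf b K : ℝ) with hn
      set P : ℝ := (b : ℝ) ^ K with hP
      have hP0 : 0 < P := by positivity
      have hP4 : 4 ≤ P := by
        have h1 : (2 : ℝ) ^ 2 ≤ (2 : ℝ) ^ K := pow_le_pow_right₀ (by norm_num) hK2
        have h2 : (2 : ℝ) ^ K ≤ (b : ℝ) ^ K := pow_le_pow_left₀ (by norm_num) hbR K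
        rw [hP]
        nlinarith
      have hn_lb : P - 1 ≤ n := by
        have h1 := Gf_ge hb K
        have h2 : ((b ^ K - 1 : ℕ) : ℝ) ≤ (Gf b K : ℝ) := by exact_mod_cast h1
        have h3 : ((b ^ K - 1 : ℕ) : ℝ) = P - 1 := by
          push_cast [Nat.cast_sub (Nat.one_le_pow K b (by omega))]
          rw [hP]
        rw [hn]
        linarith
      have hn_ub : n ≤ (K : ℝ) * P := by
        have h1 := Gf_le hb K
        have h2 : (Gf b K : ℝ) ≤ ((K * b ^ K : ℕ) : ℝ) := by exact_mod_cast h1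
        push_cast at h2
        rw [hn, hP]
        exact h2
      have hn3 : 3 ≤ n := by linarith
      have hn0 : 0 < n := by linarith
      have hen : Real.exp 1 < n := by
        have := Real.exp_one_lt_d9
        linarith
      have hlogn : 1 < Real.log n := by
        have h1 : Real.log (Real.exp 1) < Real.log n := Real.log_lt_log (Real.exp_pos 1) hen
        rwa [Real.log_exp] at h1
      have hll0 : 0 < Real.log (Real.log n) := Real.log_pos hlogn
      set den : ℝ := Real.sqrt (2 * n * Real.log (Real.log n)) with hden
      have hden0 : 0 < den := Real.sqrt_pos.mpr (by nlinarith)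
      have hll_ub : Real.log (Real.log n) ≤ (K : ℝ) * (1 + Real.log b) := by
        have h1 : Real.log (Real.log n) ≤ Real.log n :=
          Real.log_le_self (by linarith)
        have h2 : Real.log n ≤ Real.log ((K : ℝ) * P) :=
          Real.log_le_log hn0 hn_ub
        have h3 : Real.log ((K : ℝ) * P) = Real.log (K : ℝ) + (K : ℝ) * Real.log b := by
          rw [hP, Real.log_mul (by linarith) (by positivity), Real.log_pow]
        have h4 : Real.log (K : ℝ) ≤ (K : ℝ) := Real.log_le_self (by linarith)
        linarith
      have hsP : 0 ≤ Real.sqrt P := Real.sqrt_nonneg _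
      have hsP2 : 2 ≤ Real.sqrt P := by
        have : Real.sqrt 4 ≤ Real.sqrt P := Real.sqrt_le_sqrt hP4
        have h4 : Real.sqrt 4 = 2 := by
          rw [show (4 : ℝ) = 2 ^ 2 by norm_num, Real.sqrt_sq (by norm_num)]
        linarith
      have hden_ub : den ≤ c * K * Real.sqrt P := by
        have hsq : (c * K * Real.sqrt P) ^ 2 = 2 * (1 + Real.log b) * (K : ℝ) ^ 2 * P := by
          have h1 : c ^ 2 = 2 * (1 + Real.log b) := Real.sq_sqrt (by linarith)
          have h2 : (Real.sqrt P) ^ 2 = P := Real.sq_sqrt (by linarith)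
          calc (c * K * Real.sqrt P) ^ 2 = c ^ 2 * (K : ℝ) ^ 2 * (Real.sqrt P) ^ 2 := by ring
          _ = 2 * (1 + Real.log b) * (K : ℝ) ^ 2 * P := by rw [h1, h2]
        have hineq : 2 * n * Real.log (Real.log n) ≤ (c * K * Real.sqrt P) ^ 2 := by
          rw [hsq]
          have e1 : 2 * n * Real.log (Real.log n)
              ≤ 2 * ((K : ℝ) * P) * Real.log (Real.log n) := by
            have := mul_le_mul_of_nonneg_right
              (mul_le_mul_of_nonneg_left hn_ub (by norm_num : (0:ℝ) ≤ 2)) hll0.le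
            linarith [this]
          have e2 : 2 * ((K : ℝ) * P) * Real.log (Real.log n)
              ≤ 2 * ((K : ℝ) * P) * ((K : ℝ) * (1 + Real.log b)) :=
            mul_le_mul_of_nonneg_left hll_ub (by positivity)
          have e3 : 2 * ((K : ℝ) * P) * ((K : ℝ) * (1 + Real.log b))
              = 2 * (1 + Real.log b) * (K : ℝ) ^ 2 * P := by ring
          linarith
        calc den ≤ Real.sqrt ((c * K * Real.sqrt P) ^ 2) := Real.sqrt_le_sqrt hineq
        _ = c * K * Real.sqrt P := Real.sqrt_sq (by positivity)
      have step1 : (P - 1) / ((b : ℝ) * (c * K * Real.sqrt P)) ≤ (P - 1) / ((b : ℝ) * den) :=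
        div_le_div_of_nonneg_left (by linarith) (by positivity)
          (mul_le_mul_of_nonneg_left hden_ub hb0.le)
      have step2 : (Real.sqrt (b : ℝ)) ^ K / ((2 * b * c) * K)
          ≤ (P - 1) / ((b : ℝ) * (c * K * Real.sqrt P)) := by
        have hPsq : Real.sqrt P = (Real.sqrt (b : ℝ)) ^ K := by
          rw [hP]; exact sqrt_pow_eq hb K
        rw [← hPsq]
        rw [div_le_div_iff₀ (by positivity) (by positivity)]
        have e1 : Real.sqrt P * ((b : ℝ) * (c * (K : ℝ) * Real.sqrt P))
            = (b : ℝ) * c * (K : ℝ) * (Real.sqrt P * Real.sqrt P) := by ring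
        have e2 : Real.sqrt P * Real.sqrt P = P := Real.mul_self_sqrt hP0.le
        have e3 : (P - 1) * (2 * (b : ℝ) * c * (K : ℝ))
            = 2 * ((b : ℝ) * c * (K : ℝ)) * P - 2 * ((b : ℝ) * c * (K : ℝ)) := by ring
        have e4 : 0 ≤ (b : ℝ) * c * (K : ℝ) * (P - 2) :=
          mul_nonneg (by positivity) (by linarith)
        rw [e1, e2, e3]
        nlinarith [e4]
      exact le_trans step2 step1
    · have h1 : (1 : ℝ) < Real.sqrt b := by
        rw [show (1 : ℝ) = Real.sqrt 1 from (Real.sqrt_one).symm]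
        exact Real.sqrt_lt_sqrt (by norm_num) (by linarith)
      exact tendsto_ratio _ _ h1 (by positivity)
  have := tendsto_neg_atTop_atBot.comp hmain
  exact (this.congr (fun K => (hval K).symm))

end champ4

end BB

/-- **Belshaw–Borwein.** For every integer `b ≥ 2`, the base-`b` Champernowne number,
obtained by concatenating the base-`b` digit strings of `1, 2, 3, …`, is not simply
strongly normal to the base `b`. -/
theorem champernowne_not_simplyStronglyNormal (b : ℕ) (hb : 2 ≤ b) :
    ¬ SimplyStronglyNormal b (xiReal b 1 {n : ℕ | 0 < n}) := by
  intro h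
  set ξ := xiReal b 1 {n : ℕ | 0 < n} with hξ
  obtain ⟨-, hinf⟩ := h 0 (by omega)
  set Lc : ℝ := Real.sqrt ((b : ℝ) - 1) / b with hLc
  have hL0 : 0 ≤ Lc := div_nonneg (Real.sqrt_nonneg _) (by positivity)
  have hGfT : Filter.Tendsto (BB.Gf b) atTop atTop := by
    apply tendsto_atTop_mono _ tendsto_id
    intro K
    have h1 := BB.Gf_ge hb K
    have h2 : K < 2 ^ K := Nat.lt_two_pow_self
    have h3 : 2 ^ K ≤ b ^ K := Nat.pow_le_pow_left hb K
    simp only [id]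
    omega
  have hbot := BB.snRatio_champ hb
  have hev2 : ∀ᶠ K in atTop, snRatio b ξ 0 (BB.Gf b K) ≤ -Lc - 1 :=
    (tendsto_atBot.mp hbot) _
  have hfreq : ∃ᶠ n in atTop, snRatio b ξ 0 n ≤ -Lc - 1 :=
    hGfT.frequently hev2.frequently
  have hfreq' : ∃ᶠ n in atTop, (snRatio b ξ 0 n : EReal) ≤ ((-Lc - 1 : ℝ) : EReal) :=
    hfreq.mono (fun n hn => EReal.coe_le_coe_iff.mpr hn)
  have hlim := Filter.liminf_le_of_frequently_le' hfreq'
  rw [hinf] at hlim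
  have hfin : -Lc ≤ -Lc - 1 := EReal.coe_le_coe_iff.mp hlim
  linarith
end
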